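/- arXiv:1805.00910 — 7 statements merged into one kernel-verified Lean document; each statement's English description precedes it below -/
import Mathlib

section
/- Let G be a group and N a normal subgroup of G such that the quotient G/N has finite subgroup-chain length l(G/N). If N satisfies the minimal condition on centralizers, then G satisfies the minimal condition on centralizers. -/
/-- A group is locally finite if every finitely generated subgroup is finite. -/
def LocallyFiniteGroup (G : Type*) [Group G] : Prop :=
  ∀ S : Finset G, Set.Finite (Subgroup.closure (S : Set G) : Set G)

/-- A group is locally soluble if every finitely generated subgroup is soluble. -/
def LocallySolvable (G : Type*) [Group G] : Prop :=
  ∀ S : Finset G, IsSolvable (Subgroup.closure (S : Set G))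

/-- A group is locally nilpotent if every finitely generated subgroup is nilpotent. -/
def LocallyNilpotent (G : Type*) [Group G] : Prop :=
  ∀ S : Finset G, Group.IsNilpotent (Subgroup.closure (S : Set G))

/-- A strictly increasing chain of centralizers of subsets, of length `n`
(i.e. with `n + 1` members). -/
def IsCentralizerChain {G : Type*} [Group G] {n : ℕ} (c : Fin (n + 1) → Subgroup G) : Prop :=
  StrictMono c ∧ ∀ i, ∃ S : Set G, c i = Subgroup.centralizer S

/-- The c-dimension of a group: the supremum of lengths of strict chains of
nested centralizers of subsets. -/
noncomputable def cdim (G : Type*) [Group G] : ℕ∞ :=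
  ⨆ (n : ℕ) (_ : ∃ c : Fin (n + 1) → Subgroup G, IsCentralizerChain c), (n : ℕ∞)

/-- `l(G)`: the supremum of lengths of strict chains of nested subgroups. -/
noncomputable def subgroupChainLength (G : Type*) [Group G] : ℕ∞ :=
  ⨆ (n : ℕ) (_ : ∃ c : Fin (n + 1) → Subgroup G, StrictMono c), (n : ℕ∞)

/-- The minimal condition on centralizers: there is no infinite strictly
descending chain of centralizers of subsets. -/
def MinimalConditionOnCentralizers (G : Type*) [Group G] : Prop :=
  ¬ ∃ c : ℕ → Subgroup G, StrictAnti c ∧ ∀ i, ∃ S : Set G, c i = Subgroup.centralizer S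

/-- A minimal normal subgroup. -/
def IsMinimalNormal {G : Type*} [Group G] (N : Subgroup G) : Prop :=
  N.Normal ∧ N ≠ ⊥ ∧ ∀ M : Subgroup G, M.Normal → M ≤ N → M = ⊥ ∨ M = N

theorem Subgroup.normal_iSup_of_normal {G : Type*} [Group G] {ι : Sort*} (S : ι → Subgroup G)
    (h : ∀ i, (S i).Normal) : (⨆ i, S i).Normal := by
  constructor
  intro x hx g
  refine Subgroup.iSup_induction S (C := fun y => g * y * g⁻¹ ∈ ⨆ i, S i) hx
    (fun i y hy => ?_) ?_ (fun y z hy hz => ?_)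
  · exact Subgroup.mem_iSup_of_mem i ((h i).conj_mem y hy g)
  · simpa using (⨆ i, S i).one_mem
  · have hm := mul_mem hy hz
    have heq : g * (y * z) * g⁻¹ = g * y * g⁻¹ * (g * z * g⁻¹) := by group
    show g * (y * z) * g⁻¹ ∈ ⨆ i, S i
    rw [heq]; exact hm

/-- The socle: the subgroup generated by all minimal normal subgroups. -/
def socle (G : Type*) [Group G] : Subgroup G :=
  ⨆ N : { N : Subgroup G // IsMinimalNormal N }, (N : Subgroup G)

instance socle_normal (G : Type*) [Group G] : (socle G).Normal :=
  Subgroup.normal_iSup_of_normal _ (fun N => N.2.1)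

/-- A group is linear if it embeds in some `GL n F` for a field `F`. -/
def IsLinearGroup (G : Type*) [Group G] : Prop :=
  ∃ (n : ℕ) (F : Type) (_ : Field F) (φ : G →* GL (Fin n) F), Function.Injective φ

/-- A subgroup is subnormal if there is a finite chain of successive normal
subgroups connecting it to the whole group. -/
def IsSubnormal {G : Type*} [Group G] (H : Subgroup G) : Prop :=
  ∃ (n : ℕ) (c : Fin (n + 1) → Subgroup G), c 0 = H ∧ c (Fin.last n) = ⊤ ∧
    ∀ i : Fin n, c i.castSucc ≤ c i.succ ∧ ((c i.castSucc).subgroupOf (c i.succ)).Normal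

/-- A group is quasisimple if it is perfect and its central quotient is simple. -/
def IsQuasisimple (Q : Type*) [Group Q] : Prop :=
  commutator Q = ⊤ ∧ IsSimpleGroup (Q ⧸ Subgroup.center Q)

/-- A component of a group: a subnormal quasisimple subgroup. -/
def IsComponent {G : Type*} [Group G] (Q : Subgroup G) : Prop :=
  IsSubnormal Q ∧ IsQuasisimple Q

/-- The layer `E(G)`: the subgroup generated by all components. -/
def layer (G : Type*) [Group G] : Subgroup G :=
  ⨆ Q : { Q : Subgroup G // IsComponent Q }, (Q : Subgroup G)

/-- `N` is the Hirsch–Plotkin radical of `G`: the largest normal locally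
nilpotent subgroup. -/
def IsHirschPlotkinRadical (G : Type*) [Group G] (N : Subgroup G) : Prop :=
  N.Normal ∧ LocallyNilpotent N ∧ ∀ M : Subgroup G, M.Normal → LocallyNilpotent M → M ≤ N


instance centralizer_subgroupOf_normalizer_normal {G : Type*} [Group G] (H : Subgroup G) :
    ((Subgroup.centralizer (H : Set G)).subgroupOf (Subgroup.normalizer (H : Set G))).Normal := by
  rw [← Subgroup.normalizerMonoidHom_ker]
  exact MonoidHom.normal_ker _

/-- For a group `E` acting on a group `Q` and `F ≤ E`, the set of points of `Q`
fixed by every element of `F`. -/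
def fixedSet {E Q : Type*} [Monoid E] [Monoid Q] [MulDistribMulAction E Q]
    (F : Submonoid E) : Set Q :=
  {q | ∀ f ∈ F, f • q = q}

/-- A group is an (internal) direct product of finitely many simple groups. -/
def IsDirectProductOfFinitelyManySimpleGroups (H : Type*) [Group H] : Prop :=
  ∃ (n : ℕ) (N : Fin n → Subgroup H), (∀ i, (N i).Normal) ∧ iSupIndep N ∧
    (⨆ i, N i) = ⊤ ∧ ∀ i, IsSimpleGroup (N i)

section AuxMcc

private lemma aux_mono_stabilize {α : Type*} [PartialOrder α] (f : ℕ → α) (hf : Monotone f)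
    (h : ∀ g : ℕ → ℕ, StrictMono g → ¬ StrictMono (fun n => f (g n))) :
    ∃ n, ∀ m, n ≤ m → f m = f n := by
  by_contra hc
  push_neg at hc
  choose idx hidx hne using hc
  let g : ℕ → ℕ := fun n => Nat.rec 0 (fun _ k => idx k) n
  have hg : ∀ n, g (n + 1) = idx (g n) := fun n => rfl
  have hlt : ∀ n, f (g n) < f (g (n + 1)) := by
    intro n
    rw [hg]
    exact lt_of_le_of_ne (hf (hidx (g n))) (Ne.symm (hne (g n)))
  have hgmono : StrictMono g := by
    apply strictMono_nat_of_lt_succ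
    intro n
    rcases lt_or_eq_of_le (hidx (g n)) with h' | h'
    · rw [hg]; exact h'
    · exfalso; apply hne (g n); rw [← h']
  exact h g hgmono (strictMono_nat_of_lt_succ hlt)

private lemma aux_anti_stabilize {α : Type*} [PartialOrder α] (f : ℕ → α) (hf : Antitone f)
    (h : ∀ g : ℕ → ℕ, StrictMono g → ¬ StrictAnti (fun n => f (g n))) :
    ∃ n, ∀ m, n ≤ m → f m = f n := by
  by_contra hc
  push_neg at hc
  choose idx hidx hne using hc
  let g : ℕ → ℕ := fun n => Nat.rec 0 (fun _ k => idx k) n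
  have hg : ∀ n, g (n + 1) = idx (g n) := fun n => rfl
  have hlt : ∀ n, f (g (n + 1)) < f (g n) := by
    intro n
    rw [hg]
    exact lt_of_le_of_ne (hf (hidx (g n))) (hne (g n))
  have hgmono : StrictMono g := by
    apply strictMono_nat_of_lt_succ
    intro n
    rcases lt_or_eq_of_le (hidx (g n)) with h' | h'
    · rw [hg]; exact h'
    · exfalso; apply hne (g n); rw [← h']
  exact h g hgmono (strictAnti_nat_of_succ_lt hlt)

private lemma aux_chain_bound {Q : Type*} [Group Q] {l n : ℕ}
    (hl : subgroupChainLength Q = (l : ℕ∞)) (c : Fin (n + 1) → Subgroup Q)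
    (hc : StrictMono c) : n ≤ l := by
  have hex : ∃ c : Fin (n + 1) → Subgroup Q, StrictMono c := ⟨c, hc⟩
  have h1 : ((n : ℕ) : ℕ∞) ≤ subgroupChainLength Q := by
    calc ((n : ℕ) : ℕ∞)
        = ⨆ (_ : ∃ c : Fin (n + 1) → Subgroup Q, StrictMono c), ((n : ℕ) : ℕ∞) :=
          (iSup_pos (f := fun _ => ((n : ℕ) : ℕ∞)) hex).symm
      _ ≤ subgroupChainLength Q := le_iSup
          (fun n => ⨆ (_ : ∃ c : Fin (n + 1) → Subgroup Q, StrictMono c), (n : ℕ∞)) n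
  rw [hl] at h1
  exact_mod_cast h1

private lemma aux_no_strictMono {Q : Type*} [Group Q] {l : ℕ}
    (hl : subgroupChainLength Q = (l : ℕ∞)) (f : ℕ → Subgroup Q) : ¬ StrictMono f := by
  intro hf
  have hc : StrictMono (fun k : Fin (l + 1 + 1) => f (k : ℕ)) := by
    intro a b hab
    exact hf (by exact_mod_cast hab)
  have := aux_chain_bound hl _ hc
  omega

private lemma aux_no_strictAnti {Q : Type*} [Group Q] {l : ℕ}
    (hl : subgroupChainLength Q = (l : ℕ∞)) (f : ℕ → Subgroup Q) : ¬ StrictAnti f := by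
  intro hf
  have hc : StrictMono (fun k : Fin (l + 1 + 1) => f (l + 1 - (k : ℕ))) := by
    intro a b hab
    have hb : (b : ℕ) < l + 1 + 1 := b.isLt
    have hab' : (a : ℕ) < (b : ℕ) := hab
    exact hf (by omega)
  have := aux_chain_bound hl _ hc
  omega

private lemma aux_mem_centralizer_iff {G : Type*} [Group G] (x : G) (T : Set G) :
    x ∈ Subgroup.centralizer T ↔ ∀ t ∈ T, t ∈ Subgroup.centralizer ({x} : Set G) := by
  rw [Subgroup.mem_centralizer_iff]
  refine forall₂_congr fun t ht => ?_
  rw [Subgroup.mem_centralizer_iff]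
  simp [eq_comm]

private lemma aux_centralizer_closure {G : Type*} [Group G] (S : Set G) :
    Subgroup.centralizer ((Subgroup.closure S : Subgroup G) : Set G) =
      Subgroup.centralizer S := by
  ext x
  rw [aux_mem_centralizer_iff, aux_mem_centralizer_iff]
  constructor
  · exact fun h t ht => h t (Subgroup.subset_closure ht)
  · intro h
    exact fun t ht => (Subgroup.closure_le _).mpr h ht

private lemma aux_centralizer_sup {G : Type*} [Group G] (H K : Subgroup G) :
    Subgroup.centralizer ((H ⊔ K : Subgroup G) : Set G) =
      Subgroup.centralizer (H : Set G) ⊓ Subgroup.centralizer (K : Set G) := by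
  ext x
  simp only [Subgroup.mem_inf]
  rw [aux_mem_centralizer_iff, aux_mem_centralizer_iff, aux_mem_centralizer_iff]
  constructor
  · intro h
    exact ⟨fun t ht => h t (Subgroup.mem_sup_left ht),
           fun t ht => h t (Subgroup.mem_sup_right ht)⟩
  · rintro ⟨h1, h2⟩
    have : H ⊔ K ≤ Subgroup.centralizer ({x} : Set G) := sup_le h1 h2
    exact fun t ht => this ht

private lemma aux_map_centralizer {G : Type*} [Group G] (N B : Subgroup G) (hB : B ≤ N) :
    Subgroup.map N.subtype (Subgroup.centralizer (N.subtype ⁻¹' (B : Set G))) =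
      Subgroup.centralizer (B : Set G) ⊓ N := by
  ext x
  simp only [Subgroup.mem_map, Subgroup.mem_inf]
  constructor
  · rintro ⟨y, hy, rfl⟩
    refine ⟨?_, y.2⟩
    rw [Subgroup.mem_centralizer_iff]
    intro b hb
    have hbN : b ∈ N := hB hb
    have := (Subgroup.mem_centralizer_iff.mp hy) ⟨b, hbN⟩ (by simpa using hb)
    exact congrArg (Subtype.val) this
  · rintro ⟨hx, hxN⟩
    refine ⟨⟨x, hxN⟩, ?_, rfl⟩
    rw [Subgroup.mem_centralizer_iff]
    intro t ht
    have := (Subgroup.mem_centralizer_iff.mp hx) (t : G) ht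
    exact Subtype.ext this

private lemma aux_sandwich {G : Type*} [Group G] (N H K : Subgroup G) [N.Normal]
    (hHK : H ≤ K) (hinf : H ⊓ N = K ⊓ N)
    (hmap : H.map (QuotientGroup.mk' N) = K.map (QuotientGroup.mk' N)) : H = K := by
  refine le_antisymm hHK fun k hk => ?_
  have : (QuotientGroup.mk' N) k ∈ K.map (QuotientGroup.mk' N) := ⟨k, hk, rfl⟩
  rw [← hmap] at this
  obtain ⟨h, hh, heq⟩ := this
  have hN : h⁻¹ * k ∈ N := by
    refine QuotientGroup.eq.mp ?_
    simpa [QuotientGroup.mk'_apply] using heq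
  have hK : h⁻¹ * k ∈ K ⊓ N :=
    Subgroup.mem_inf.mpr ⟨mul_mem (K.inv_mem (hHK hh)) hk, hN⟩
  rw [← hinf] at hK
  have : h * (h⁻¹ * k) ∈ H := mul_mem hh (Subgroup.mem_inf.mp hK).1
  simpa using this

end AuxMcc

theorem minimalConditionOnCentralizers_of_quotient_finite_length
    (G : Type*) [Group G] (N : Subgroup G) [N.Normal] (l : ℕ)
    (hl : subgroupChainLength (G ⧸ N) = (l : ℕ∞))
    (hN : MinimalConditionOnCentralizers N) :
    MinimalConditionOnCentralizers G := by
  rintro ⟨c, hstrict, hcen⟩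
  choose S hS using hcen
  set π := QuotientGroup.mk' N with hπ
  -- the ascending chain of subgroups whose centralizers are the `c i`
  set H : ℕ → Subgroup G := fun i => Subgroup.closure (⋃ j ∈ Set.Iic i, S j) with hHdef
  have hHmono : Monotone H := by
    intro i j hij
    exact Subgroup.closure_mono (Set.biUnion_mono (fun k hk => hk.trans hij) fun _ _ => le_rfl)
  have hcH : ∀ i, Subgroup.centralizer (H i : Set G) = c i := by
    intro i
    rw [hHdef]
    simp only
    rw [aux_centralizer_closure]
    ext x
    rw [Subgroup.mem_centralizer_iff]
    constructor
    · intro h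
      rw [hS i, Subgroup.mem_centralizer_iff]
      intro g hg
      exact h g (Set.mem_biUnion (Set.mem_Iic.mpr le_rfl) hg)
    · intro hx g hg
      obtain ⟨j, hj, hgj⟩ := Set.mem_iUnion₂.mp hg
      have hxj : x ∈ c j := hstrict.antitone (Set.mem_Iic.mp hj) hx
      rw [hS j] at hxj
      exact Subgroup.mem_centralizer_iff.mp hxj g hgj
  -- Step 1: images of the `H i` in the quotient stabilize
  obtain ⟨i₀, hi₀⟩ := aux_mono_stabilize (fun i => (H i).map π)
    (fun i j hij => Subgroup.map_mono (hHmono hij))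
    (fun g hg hmono => aux_no_strictMono hl _ hmono)
  -- Step 2: for i ≥ i₀, H i = H i₀ ⊔ (H i ⊓ N)
  have hstep2 : ∀ i, i₀ ≤ i → H i = H i₀ ⊔ (H i ⊓ N) := by
    intro i hi
    refine le_antisymm ?_ (sup_le (hHmono hi) inf_le_left)
    intro h hh
    have : π h ∈ (H i).map π := ⟨h, hh, rfl⟩
    rw [hi₀ i hi] at this
    obtain ⟨m, hm, hmeq⟩ := this
    have hmn : m⁻¹ * h ∈ N := by
      refine QuotientGroup.eq.mp ?_
      simpa [hπ, QuotientGroup.mk'_apply] using hmeq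
    have hmh : m⁻¹ * h ∈ H i ⊓ N :=
      Subgroup.mem_inf.mpr ⟨mul_mem ((H i).inv_mem (hHmono hi hm)) hh, hmn⟩
    have : m * (m⁻¹ * h) ∈ H i₀ ⊔ (H i ⊓ N) :=
      mul_mem (Subgroup.mem_sup_left hm) (Subgroup.mem_sup_right hmh)
    simpa using this
  -- Step 3: for i ≥ i₀, c i decomposes
  have hstep3 : ∀ i, i₀ ≤ i → c i = Subgroup.centralizer ((H i₀ : Subgroup G) : Set G) ⊓
      Subgroup.centralizer (((H i ⊓ N : Subgroup G)) : Set G) := by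
    intro i hi
    rw [← hcH i, hstep2 i hi, aux_centralizer_sup, ← hstep2 i hi]
  -- Step 4: the centralizers-in-N of the `H i ⊓ N` stabilize, by M_c on N
  set D : ℕ → Subgroup N := fun i =>
    Subgroup.centralizer (N.subtype ⁻¹' ((H i ⊓ N : Subgroup G) : Set G)) with hDdef
  have hDanti : Antitone D := by
    intro i j hij
    exact Subgroup.centralizer_le (Set.preimage_mono (by
      intro x hx
      exact ⟨hHmono hij hx.1, hx.2⟩))
  obtain ⟨i₁, hi₁⟩ := aux_anti_stabilize D hDanti
    (fun g hg hanti => hN ⟨fun n => D (g n), hanti, fun n => ⟨_, rfl⟩⟩)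
  have hstep4 : ∀ i, i₁ ≤ i →
      Subgroup.centralizer (((H i ⊓ N : Subgroup G)) : Set G) ⊓ N =
      Subgroup.centralizer (((H i₁ ⊓ N : Subgroup G)) : Set G) ⊓ N := by
    intro i hi
    rw [← aux_map_centralizer N _ inf_le_right, ← aux_map_centralizer N _ inf_le_right]
    rw [show Subgroup.centralizer (N.subtype ⁻¹' ((H i ⊓ N : Subgroup G) : Set G)) = D i from rfl,
        show Subgroup.centralizer (N.subtype ⁻¹' ((H i₁ ⊓ N : Subgroup G) : Set G)) = D i₁
          from rfl, hi₁ i hi]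
  -- Step 5: images of the `c i` in the quotient stabilize
  obtain ⟨i₂, hi₂⟩ := aux_anti_stabilize (fun i => (c i).map π)
    (fun i j hij => Subgroup.map_mono (hstrict.antitone hij))
    (fun g hg hanti => aux_no_strictAnti hl _ hanti)
  -- conclude
  set i := max (max i₀ i₁) i₂ with hidef
  have h0 : i₀ ≤ i := le_trans (le_max_left _ _) (le_max_left _ _)
  have h1 : i₁ ≤ i := le_trans (le_max_right _ _) (le_max_left _ _)
  have h2 : i₂ ≤ i := le_max_right _ _
  have hinfN : ∀ j, i₀ ≤ j → i₁ ≤ j → c j ⊓ N =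
      Subgroup.centralizer ((H i₀ : Subgroup G) : Set G) ⊓
      (Subgroup.centralizer (((H i₁ ⊓ N : Subgroup G)) : Set G) ⊓ N) := by
    intro j hj0 hj1
    rw [hstep3 j hj0, inf_assoc, hstep4 j hj1]
  have heq : c (i + 1) = c i := by
    refine aux_sandwich N _ _ ?_ ?_ ?_
    · exact hstrict.antitone (Nat.le_succ i)
    · rw [hinfN (i + 1) (h0.trans (Nat.le_succ i)) (h1.trans (Nat.le_succ i)), hinfN i h0 h1]
    · rw [hi₂ (i + 1) (h2.trans (Nat.le_succ i)), hi₂ i h2]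
  exact absurd heq (hstrict (Nat.lt_succ_self i)).ne
end

section
/- Let G be a group and N a normal subgroup of G such that the quotient G/N has finite subgroup-chain length l(G/N) = l. If N has finite c-dimension k, then G has finite c-dimension at most (l+1)²(k+1). -/
section AuxCdim

variable {G : Type*} [Group G]

private lemma myDedekind (N : Subgroup G) [N.Normal] {A B : Subgroup G} (hAB : A ≤ B)
    (h1 : A ⊓ N = B ⊓ N) (h2 : A ⊔ N = B ⊔ N) : A = B := by
  refine le_antisymm hAB fun b hb => ?_
  have hb2 : b ∈ (↑(A ⊔ N) : Set G) := by
    rw [h2]; exact (le_sup_left : B ≤ B ⊔ N) hb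
  rw [Subgroup.mul_normal A N] at hb2
  obtain ⟨a, ha, x, hx, rfl⟩ := hb2
  have hx2 : x ∈ B ⊓ N := ⟨by
    have : a⁻¹ * (a * x) ∈ B := mul_mem (inv_mem (hAB ha)) hb
    simpa using this, hx⟩
  rw [← h1] at hx2
  exact mul_mem ha hx2.1

private lemma extract_chain {α : Type*} [PartialOrder α] {n : ℕ} (f : Fin (n + 1) → α)
    (hf : Monotone f) (A : Finset (Fin n)) (hA : ∀ i ∈ A, f i.castSucc < f i.succ) :
    ∃ g : Fin (A.card + 1) → α, StrictMono g ∧ ∀ j, ∃ i, g j = f i := by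
  set t := A.card with htdef
  let e : Fin t ≃o {x // x ∈ A} := A.orderIsoOfFin rfl
  let idx : Fin (t + 1) → Fin (n + 1) := fun j =>
    if h : (j : ℕ) < t then ((e ⟨(j : ℕ), h⟩ : Fin n)).castSucc else Fin.last n
  refine ⟨f ∘ idx, ?_, fun j => ⟨idx j, rfl⟩⟩
  rw [Fin.strictMono_iff_lt_succ]
  intro j
  have hjlt : ((j.castSucc : Fin (t+1)) : ℕ) < t := by simp [j.isLt]
  have hcs : idx j.castSucc = ((e ⟨(j : ℕ), by simpa using j.isLt⟩ : Fin n)).castSucc := by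
    simp only [idx, dif_pos hjlt, Fin.coe_castSucc]
  set a : Fin n := (e ⟨(j : ℕ), by simpa using j.isLt⟩ : Fin n) with hadef
  have haA : a ∈ A := (e _).2
  by_cases h : ((j.succ : Fin (t+1)) : ℕ) < t
  · have hss : idx j.succ = ((e ⟨(j : ℕ) + 1, by simpa using h⟩ : Fin n)).castSucc := by
      simp only [idx, dif_pos h, Fin.val_succ]
    set b : Fin n := (e ⟨(j : ℕ) + 1, by simpa using h⟩ : Fin n) with hbdef
    have hab : a < b := by
      have : (⟨(j : ℕ), by simpa using j.isLt⟩ : Fin t) < ⟨(j : ℕ) + 1, by simpa using h⟩ := by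
        rw [Fin.lt_def]; exact Nat.lt_succ_self _
      exact e.strictMono this
    have h1 : f a.castSucc < f a.succ := hA a haA
    have h2 : f a.succ ≤ f b.castSucc := hf (by
      rw [Fin.le_def]
      simp only [Fin.val_succ, Fin.coe_castSucc]
      exact Fin.lt_def.mp hab)
    simp only [Function.comp_apply, hcs, hss]
    exact lt_of_lt_of_le h1 h2
  · have hss : idx j.succ = Fin.last n := by simp only [idx, dif_neg h]
    have h1 : f a.castSucc < f a.succ := hA a haA
    have h2 : f a.succ ≤ f (Fin.last n) := hf (Fin.le_last _)
    simp only [Function.comp_apply, hcs, hss]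
    exact lt_of_lt_of_le h1 h2

private lemma quot_bound (N : Subgroup G) [N.Normal] {l : ℕ}
    (hl : subgroupChainLength (G ⧸ N) = (l : ℕ∞)) {t : ℕ}
    (g : Fin (t + 1) → Subgroup G) (hg : StrictMono g) (hN : ∀ j, N ≤ g j) : t ≤ l := by
  set q : Fin (t + 1) → Subgroup (G ⧸ N) := fun j => (g j).map (QuotientGroup.mk' N) with hq
  have hinj : ∀ j j', q j = q j' → g j = g j' := by
    intro j j' h
    have h1 := congrArg (Subgroup.comap (QuotientGroup.mk' N)) h
    rw [hq] at h1
    simp only [Subgroup.comap_map_eq, QuotientGroup.ker_mk'] at h1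
    rwa [sup_eq_left.mpr (hN j), sup_eq_left.mpr (hN j')] at h1
  have hqm : StrictMono q := fun j j' hjj =>
    lt_of_le_of_ne (Subgroup.map_mono (hg hjj).le) fun h => (hg hjj).ne (hinj _ _ h)
  have hle : (t : ℕ∞) ≤ subgroupChainLength (G ⧸ N) :=
    le_iSup₂ (f := fun n (_ : ∃ c : Fin (n + 1) → Subgroup (G ⧸ N), StrictMono c) => (n : ℕ∞))
      t ⟨q, hqm⟩
  rw [hl] at hle
  exact_mod_cast hle

private lemma cent_bound {H : Type*} [Group H] {k : ℕ} (hk : cdim H = (k : ℕ∞)) {t : ℕ}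
    (c : Fin (t + 1) → Subgroup H) (hc : StrictMono c)
    (hcent : ∀ j, ∃ S : Set H, c j = Subgroup.centralizer S) : t ≤ k := by
  have hle : (t : ℕ∞) ≤ cdim H :=
    le_iSup₂ (f := fun n (_ : ∃ c : Fin (n + 1) → Subgroup H, IsCentralizerChain c) => (n : ℕ∞))
      t ⟨c, hc, hcent⟩
  rw [hk] at hle
  exact_mod_cast hle

private lemma count_partition (N : Subgroup G) [N.Normal] {m : ℕ}
    (f : Fin (m + 1) → Subgroup G) (hf : StrictMono f) :
    ∃ A B : Finset (Fin m), A.card + B.card = m ∧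
      (∀ i ∈ A, f i.castSucc ⊔ N < f i.succ ⊔ N) ∧
      (∀ i ∈ B, f i.castSucc ⊓ N < f i.succ ⊓ N) := by
  classical
  refine ⟨Finset.univ.filter (fun i => f i.castSucc ⊔ N < f i.succ ⊔ N),
    Finset.univ.filter (fun i => ¬ (f i.castSucc ⊔ N < f i.succ ⊔ N)), ?_, ?_, ?_⟩
  · rw [Finset.card_filter_add_card_filter_not, Finset.card_univ, Fintype.card_fin]
  · intro i hi; exact (Finset.mem_filter.mp hi).2
  · intro i hi
    have hns := (Finset.mem_filter.mp hi).2
    have hle := (hf (Fin.castSucc_lt_succ : i.castSucc < i.succ)).le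
    have hsup : f i.castSucc ⊔ N = f i.succ ⊔ N :=
      ((sup_le_sup_right hle N).lt_or_eq).resolve_left hns
    have hinfle : f i.castSucc ⊓ N ≤ f i.succ ⊓ N := inf_le_inf_right N hle
    refine hinfle.lt_of_ne fun heq => ?_
    exact (hf (Fin.castSucc_lt_succ : i.castSucc < i.succ)).ne (myDedekind N hle heq hsup)

private lemma cent_inf_subgroupOf (N : Subgroup G) (X : Set G) (hX : X ⊆ ↑N) :
    (Subgroup.centralizer X ⊓ N).subgroupOf N = Subgroup.centralizer (N.subtype ⁻¹' X) := by
  ext n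
  simp only [Subgroup.mem_subgroupOf, Subgroup.mem_inf, Subgroup.mem_centralizer_iff,
    Set.mem_preimage]
  constructor
  · rintro ⟨h, -⟩ m hm
    exact Subtype.ext (h ↑m hm)
  · intro h
    refine ⟨fun x hx => ?_, n.2⟩
    obtain ⟨m, rfl⟩ : ∃ m : N, ↑m = x := ⟨⟨x, hX hx⟩, rfl⟩
    exact_mod_cast congrArg Subtype.val (h m hx)

private lemma inner_bound (N : Subgroup G) [N.Normal] {l k : ℕ}
    (hl : subgroupChainLength (G ⧸ N) = (l : ℕ∞)) (hk : cdim N = (k : ℕ∞)) {m : ℕ}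
    (D : Fin (m + 1) → Subgroup G) (hD : StrictMono D)
    (hDc : ∀ j, ∃ S : Set G, D j = Subgroup.centralizer S ⊓ N) : m ≤ l + k := by
  set T : Fin (m + 1) → Subgroup G := fun j => Subgroup.centralizer ↑(D j) with hT
  have hclosed : ∀ j, D j = Subgroup.centralizer ↑(T j) ⊓ N := by
    intro j
    obtain ⟨S, hS⟩ := hDc j
    refine le_antisymm ?_ ?_
    · refine le_inf ?_ (by rw [hS]; exact inf_le_right)
      intro d hd
      rw [Subgroup.mem_centralizer_iff]
      intro x hx
      exact (Subgroup.mem_centralizer_iff.mp hx d hd).symm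
    · have hST : S ⊆ ↑(T j) := by
        intro s hs
        rw [hT, SetLike.mem_coe, Subgroup.mem_centralizer_iff]
        intro d hd
        have : d ∈ Subgroup.centralizer S := by rw [hS] at hd; exact hd.1
        exact (Subgroup.mem_centralizer_iff.mp this s hs).symm
      rw [hS]
      exact inf_le_inf_right N (Subgroup.centralizer_le hST)
  have hTanti : StrictAnti T := by
    intro j j' hjj
    have hle : T j' ≤ T j := Subgroup.centralizer_le (SetLike.coe_subset_coe.mpr (hD hjj).le)
    refine hle.lt_of_ne fun heq => ?_
    have : D j = D j' := by rw [hclosed j, hclosed j', heq]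
    exact (hD hjj).ne this
  set U : Fin (m + 1) → Subgroup G := fun j => T j.rev with hU
  have hUm : StrictMono U := fun j j' hjj => hTanti (Fin.rev_lt_rev.mpr hjj)
  obtain ⟨A, B, hcard, hAj, hBj⟩ := count_partition N U hUm
  -- A-jumps bounded by l
  have hAle : A.card ≤ l := by
    obtain ⟨g, hg, hgr⟩ := extract_chain (fun i => U i ⊔ N)
      (fun x y hxy => sup_le_sup_right (hUm.monotone hxy) N) A hAj
    exact quot_bound N hl g hg fun j => by
      obtain ⟨i, hi⟩ := hgr j; rw [hi]; exact le_sup_right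
  -- B-jumps bounded by k
  have hBle : B.card ≤ k := by
    obtain ⟨W, hW, hWr⟩ := extract_chain (fun i => U i ⊓ N)
      (fun x y hxy => inf_le_inf_right N (hUm.monotone hxy)) B hBj
    have hWN : ∀ j, W j ≤ N := by
      intro j; obtain ⟨i, hi⟩ := hWr j; rw [hi]; exact inf_le_right
    have hW'm : StrictMono (fun j => (W j).subgroupOf N) := by
      intro j j' hjj
      refine (Subgroup.comap_mono (hW hjj).le).lt_of_ne fun heq => ?_
      have h1 := congrArg (Subgroup.map N.subtype) heq
      simp only [Subgroup.map_comap_eq, Subgroup.range_subtype] at h1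
      rw [inf_eq_right.mpr (hWN j), inf_eq_right.mpr (hWN j')] at h1
      exact (hW hjj).ne h1
    refine cent_bound hk (fun j => (W j).subgroupOf N) hW'm fun j => ?_
    obtain ⟨i, hi⟩ := hWr j
    have hDN : (↑(D i.rev) : Set G) ⊆ ↑N := by
      obtain ⟨S, hS⟩ := hDc i.rev
      intro x hx; rw [hS] at hx; exact hx.2
    refine ⟨N.subtype ⁻¹' ↑(D i.rev), ?_⟩
    show (W j).subgroupOf N = _
    rw [hi]
    show ((fun i => U i ⊓ N) i).subgroupOf N = _
    rw [hU]
    exact cent_inf_subgroupOf N _ hDN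
  omega

end AuxCdim

theorem cdim_le_of_quotient_finite_length
    (G : Type*) [Group G] (N : Subgroup G) [N.Normal] (l k : ℕ)
    (hl : subgroupChainLength (G ⧸ N) = (l : ℕ∞))
    (hk : cdim N = (k : ℕ∞)) :
    cdim G ≤ (((l + 1) ^ 2 * (k + 1) : ℕ) : ℕ∞) := by
  refine iSup₂_le fun n hn => ?_
  obtain ⟨c, hcm, hcc⟩ := hn
  have hbound : n ≤ 2 * l + k := by
    obtain ⟨A, B, hcard, hAj, hBj⟩ := count_partition N c hcm
    have hAle : A.card ≤ l := by
      obtain ⟨g, hg, hgr⟩ := extract_chain (fun i => c i ⊔ N)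
        (fun x y hxy => sup_le_sup_right (hcm.monotone hxy) N) A hAj
      exact quot_bound N hl g hg fun j => by
        obtain ⟨i, hi⟩ := hgr j; rw [hi]; exact le_sup_right
    have hBle : B.card ≤ l + k := by
      obtain ⟨D, hD, hDr⟩ := extract_chain (fun i => c i ⊓ N)
        (fun x y hxy => inf_le_inf_right N (hcm.monotone hxy)) B hBj
      refine inner_bound N hl hk D hD fun j => ?_
      obtain ⟨i, hi⟩ := hDr j
      obtain ⟨S, hS⟩ := hcc i
      exact ⟨S, by rw [hi]; show c i ⊓ N = _; rw [hS]⟩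
    omega
  have harith : n ≤ (l + 1) ^ 2 * (k + 1) := by
    have hexp : (l + 1) ^ 2 * (k + 1) = l ^ 2 * k + l ^ 2 + 2 * l * k + 2 * l + k + 1 := by ring
    omega
  exact_mod_cast Nat.cast_le.mpr harith
end

section
/- Let K be a field and n a natural number. Then the c-dimension of the general linear group GL_n(K) is at most n² + 1. -/
/-- The linear centralizer of a set of invertible matrices, as a submodule of the
matrix algebra. -/
def linCent (K : Type*) [Field K] (n : ℕ) (S : Set (GL (Fin n) K)) : Submodule K (Matrix (Fin n) (Fin n) K) where
  carrier := {A | ∀ s ∈ S, (s : Matrix (Fin n) (Fin n) K) * A = A * (s : Matrix (Fin n) (Fin n) K)}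
  add_mem' := by
    intro a b ha hb s hs
    simp [mul_add, add_mul, ha s hs, hb s hs]
  zero_mem' := by intro s hs; simp
  smul_mem' := by
    intro c a ha s hs
    simp [Matrix.mul_smul, Matrix.smul_mul, ha s hs]

theorem nat_le_sq_of_centralizerChain (K : Type*) [Field K] (n : ℕ) (m : ℕ) (c : Fin (m + 1) → Subgroup (GL (Fin n) K))
    (hmono : StrictMono c) (hcent : ∀ i, ∃ S, c i = Subgroup.centralizer S) :
    m ≤ n ^ 2 := by
  classical
  set M := Matrix (Fin n) (Fin n) K
  set V : Fin (m + 1) → Submodule K M :=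
    fun i => Submodule.span K ((fun g : GL (Fin n) K => (g : M)) '' (c i : Set (GL (Fin n) K)))
    with hV
  -- span of the centralizer lies inside the linear centralizer
  have hVW : ∀ i S, c i = Subgroup.centralizer S → V i ≤ linCent K n S := by
    intro i S hS
    apply Submodule.span_le.mpr
    rintro _ ⟨g, hg, rfl⟩ s hs
    rw [hS] at hg
    have h := (Subgroup.mem_centralizer_iff.mp hg) s hs
    show (s : M) * (g : M) = (g : M) * (s : M)
    exact_mod_cast congrArg (Units.val) h
  have hVsm : StrictMono V := by
    rw [Fin.strictMono_iff_lt_succ]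
    intro i
    obtain ⟨S, hS⟩ := hcent i.castSucc
    have hlt := hmono (Fin.castSucc_lt_succ : i.castSucc < i.succ)
    constructor
    · exact Submodule.span_mono (Set.image_mono (le_of_lt hlt))
    · intro hle
      obtain ⟨x, hx1, hx2⟩ := SetLike.exists_of_lt hlt
      have hxV : (x : M) ∈ V i.castSucc := hle (Submodule.subset_span ⟨x, hx1, rfl⟩)
      have hxC : (x : M) ∈ linCent K n S := hVW _ _ hS hxV
      apply hx2
      rw [hS, Subgroup.mem_centralizer_iff]
      intro s hs
      exact Units.ext (hxC s hs)
  have : FiniteDimensional K M := by infer_instance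
  have hrank : ∀ i : Fin (m + 1), (i : ℕ) ≤ Module.finrank K (V i) := by
    intro i
    induction i using Fin.induction with
    | zero => simp
    | succ j ih =>
      have := Submodule.finrank_lt_finrank_of_lt (hVsm (Fin.castSucc_lt_succ : j.castSucc < j.succ))
      have hj : (j.castSucc : ℕ) ≤ Module.finrank K (V j.castSucc) := ih
      simp only [Fin.val_succ, Fin.coe_castSucc] at *
      omega
  have h1 : (m : ℕ) ≤ Module.finrank K (V (Fin.last m)) := by
    simpa using hrank (Fin.last m)
  have h2 : Module.finrank K (V (Fin.last m)) ≤ Module.finrank K M :=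
    Submodule.finrank_le _
  have h3 : Module.finrank K M = n ^ 2 := by
    simp [M, Module.finrank_matrix, sq]
  omega


theorem cdim_GL_le (K : Type*) [Field K] (n : ℕ) :
    cdim (GL (Fin n) K) ≤ ((n ^ 2 + 1 : ℕ) : ℕ∞) := by
  rw [cdim]
  apply iSup_le; intro m
  apply iSup_le; rintro ⟨c, hmono, hcent⟩
  exact Nat.cast_le.mpr
    ((nat_le_sq_of_centralizerChain K n m c hmono hcent).trans (Nat.le_succ _))
end

section
/- For every natural number n, the c-dimension of the symmetric group Sym_n is at most n² + 1, and the c-dimension of the alternating group Alt_n is at most n² + 1. -/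
section Aux
variable {G : Type*} [Group G]

lemma subgroup_card_lt_of_lt [Finite G] {H K : Subgroup G} (h : H < K) :
    Nat.card H < Nat.card K := by
  have hss : (H : Set G) ⊂ (K : Set G) := SetLike.coe_ssubset_coe.2 h
  have := Set.ncard_lt_ncard hss (Set.toFinite _)
  rwa [← Nat.card_coe_set_eq, ← Nat.card_coe_set_eq] at this

lemma card_le_of_strictMono_chain [Finite G] {m : ℕ} (c : Fin (m + 1) → Subgroup G)
    (hc : StrictMono c) : 2 ^ m ≤ Nat.card G := by
  have key : ∀ i : Fin (m + 1), 2 ^ (i : ℕ) ≤ Nat.card (c i) := by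
    intro i
    induction i using Fin.induction with
    | zero => simpa using Nat.one_le_iff_ne_zero.2 (Nat.card_pos (α := c 0)).ne'
    | succ i ih =>
      have hlt : c i.castSucc < c i.succ := hc (Fin.castSucc_lt_succ (i := i))
      obtain ⟨k, hk⟩ := Subgroup.card_dvd_of_le hlt.le
      have hcardlt := subgroup_card_lt_of_lt hlt
      have ha : 0 < Nat.card (c i.castSucc) := Nat.card_pos
      have h1k : 2 ≤ k := by
        rcases Nat.lt_or_ge k 2 with hko | hko
        · interval_cases k <;> omega
        · omega
      calc 2 ^ ((i.succ : Fin (m+1)) : ℕ) = 2 ^ ((i : ℕ) + 1) := by simp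
        _ = 2 ^ (i : ℕ) * 2 := by ring
        _ ≤ Nat.card (c i.castSucc) * k := Nat.mul_le_mul ih h1k
        _ = Nat.card (c i.succ) := hk.symm
  calc 2 ^ m = 2 ^ ((Fin.last m : Fin (m+1)) : ℕ) := by simp
    _ ≤ Nat.card (c (Fin.last m)) := key _
    _ ≤ Nat.card G := Nat.card_le_card_of_injective _ (c (Fin.last m)).subtype_injective

lemma cdim_le_of_card_le [Finite G] {k : ℕ} (h : Nat.card G ≤ 2 ^ k) :
    cdim G ≤ (k : ℕ∞) := by
  rw [cdim]
  refine iSup₂_le fun m hm => ?_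
  obtain ⟨c, hc, _⟩ := hm
  have h2 : (2:ℕ) ^ m ≤ 2 ^ k := (card_le_of_strictMono_chain c hc).trans h
  exact_mod_cast (Nat.pow_le_pow_iff_right (by norm_num)).1 h2

lemma factorial_le_two_pow (n : ℕ) : Nat.factorial n ≤ 2 ^ (n ^ 2 + 1) := by
  calc Nat.factorial n ≤ n ^ n := Nat.factorial_le_pow n
    _ ≤ (2 ^ n) ^ n := Nat.pow_le_pow_left (Nat.lt_two_pow_self (n := n)).le n
    _ = 2 ^ (n * n) := by rw [← pow_mul]
    _ ≤ 2 ^ (n ^ 2 + 1) := Nat.pow_le_pow_right (by norm_num) (by nlinarith [sq_nonneg n])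

end Aux

theorem cdim_symmetric_and_alternating_le (n : ℕ) :
    cdim (Equiv.Perm (Fin n)) ≤ ((n ^ 2 + 1 : ℕ) : ℕ∞) ∧
    cdim (alternatingGroup (Fin n)) ≤ ((n ^ 2 + 1 : ℕ) : ℕ∞) := by
  have hperm : Nat.card (Equiv.Perm (Fin n)) ≤ 2 ^ (n ^ 2 + 1) := by
    rw [Nat.card_eq_fintype_card, Fintype.card_perm, Fintype.card_fin]
    exact factorial_le_two_pow n
  have halt : Nat.card (alternatingGroup (Fin n)) ≤ 2 ^ (n ^ 2 + 1) :=
    le_trans (Nat.card_le_card_of_injective _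
      (alternatingGroup (Fin n)).subtype_injective) hperm
  exact ⟨cdim_le_of_card_le hperm, cdim_le_of_card_le halt⟩
end

section
/- Let G be a locally finite group, let Q be a component of G, and let R be the locally soluble radical of G. Denote by Q̄ the image of Q under the natural homomorphism G → G/R. Then the group of induced automorphisms N_G(Q)/C_G(Q) is isomorphic to N_{G/R}(Q̄)/C_{G/R}(Q̄). -/
section AuxComponentIso

open Subgroup Function
open scoped commutatorElement

section Rel
variable {G : Type*} [Group G]

def RelNorm (H K : Subgroup G) : Prop := ∀ g ∈ K, ∀ x ∈ H, g * x * g⁻¹ ∈ H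

def RelSN : ℕ → Subgroup G → Subgroup G → Prop
  | 0, H, K => H = K
  | n+1, H, K => ∃ L : Subgroup G, L ≤ K ∧ RelNorm L K ∧ RelSN n H L

theorem relSN_le : ∀ {n : ℕ} {H K : Subgroup G}, RelSN n H K → H ≤ K
  | 0, _, _, h => le_of_eq h
  | n+1, _, _, ⟨L, hLK, _, h⟩ => (relSN_le h).trans hLK

theorem relSN_inf : ∀ {n : ℕ} {H K : Subgroup G}, RelSN n H K →
    ∀ {L : Subgroup G}, L ≤ K → RelSN n (H ⊓ L) L
  | 0, H, K, h, L, hLK => by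
      simp only [RelSN] at h ⊢; rw [h, inf_eq_right.2 hLK]
  | n+1, H, K, ⟨L', hL'K, hnorm, hsn⟩, L, hLK => by
      refine ⟨L' ⊓ L, inf_le_right, ?_, ?_⟩
      · rintro g hg x ⟨hx1, hx2⟩
        exact ⟨hnorm g (hLK hg) x hx1, L.mul_mem (L.mul_mem hg hx2) (L.inv_mem hg)⟩
      · have := relSN_inf hsn (L := L' ⊓ L) inf_le_left
        rwa [← inf_assoc, inf_eq_left.2 (relSN_le hsn)] at this

theorem relSN_of_le {n : ℕ} {H K L : Subgroup G} (h : RelSN n H K) (h1 : H ≤ L) (h2 : L ≤ K) :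
    RelSN n H L := by
  have := relSN_inf h h2
  rwa [inf_eq_left.2 h1] at this

end Rel

theorem comm_center_right {X : Type*} [Group X] (a b x : X) (hx : x ∈ center X) :
    ⁅a * x, b⁆ = ⁅a, b⁆ := by
  have hb : x * b * x⁻¹ = b := by
    rw [← Subgroup.mem_center_iff.1 hx b, mul_inv_cancel_right]
  have key : a * x * b * (a * x)⁻¹ * b⁻¹ = a * (x * b * x⁻¹) * a⁻¹ * b⁻¹ := by group
  rw [commutatorElement_def, commutatorElement_def, key, hb]

theorem comm_center_left {X : Type*} [Group X] (a b x : X) (hx : x ∈ center X) :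
    ⁅a, b * x⁆ = ⁅a, b⁆ := by
  have hb : x * a⁻¹ * x⁻¹ = a⁻¹ := by
    rw [← Subgroup.mem_center_iff.1 hx a⁻¹, mul_inv_cancel_right]
  have key : a * (b * x) * a⁻¹ * (b * x)⁻¹ = a * b * (x * a⁻¹ * x⁻¹) * b⁻¹ := by group
  rw [commutatorElement_def, commutatorElement_def, key, hb]

theorem QSnormal {X : Type*} [Group X] (hperf : _root_.commutator X = ⊤)
    (hsimp : IsSimpleGroup (X ⧸ center X)) (N : Subgroup X) (hN : N.Normal) :
    N = ⊤ ∨ N ≤ center X := by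
  rcases hsimp.eq_bot_or_eq_top_of_normal (N.map (QuotientGroup.mk' (center X)))
      (hN.map _ (QuotientGroup.mk'_surjective _)) with h | h
  · right
    rw [Subgroup.map_eq_bot_iff, QuotientGroup.ker_mk'] at h
    exact h
  · left
    have hsup : N ⊔ center X = ⊤ := by
      have := congrArg (comap (QuotientGroup.mk' (center X))) h
      rwa [comap_map_eq, QuotientGroup.ker_mk', comap_top] at this
    have hle : ⁅(⊤ : Subgroup X), (⊤ : Subgroup X)⁆ ≤ N := by
      rw [← hsup, commutator_le]
      intro g₁ hg₁ g₂ hg₂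
      have hg₁' : (g₁ : X) ∈ (↑(N ⊔ center X) : Set X) := hg₁
      have hg₂' : (g₂ : X) ∈ (↑(N ⊔ center X) : Set X) := hg₂
      rw [Subgroup.mul_normal N (center X)] at hg₁' hg₂'
      obtain ⟨n₁, hn₁, z₁, hz₁, rfl⟩ := hg₁'
      obtain ⟨n₂, hn₂, z₂, hz₂, rfl⟩ := hg₂'
      rw [comm_center_right _ _ _ hz₁, comm_center_left _ _ _ hz₂]
      rw [commutatorElement_def]
      exact N.mul_mem (N.mul_mem (N.mul_mem hn₁ hn₂) (N.inv_mem hn₁)) (N.inv_mem hn₂)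
    rw [← _root_.commutator_def, hperf] at hle
    exact top_le_iff.1 hle

section QS
variable {G : Type*} [Group G]

theorem comm_bot_swap {A B : Subgroup G} (h : ⁅A, B⁆ = ⊥) : ⁅B, A⁆ = ⊥ := by
  rw [eq_bot_iff] at h ⊢
  rw [Subgroup.commutator_le] at h ⊢
  intro b hb a ha
  have := h a ha b hb
  rw [Subgroup.mem_bot] at this ⊢
  rw [← commutatorElement_inv, this, inv_one]

theorem perfsub {H : Subgroup G} (hperf : _root_.commutator ↥H = ⊤) : ⁅H, H⁆ = H := by
  have h1 : Subgroup.map H.subtype ⊤ = H := by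
    rw [← MonoidHom.range_eq_map, Subgroup.range_subtype]
  calc ⁅H, H⁆ = ⁅Subgroup.map H.subtype ⊤, Subgroup.map H.subtype ⊤⁆ := by rw [h1]
    _ = Subgroup.map H.subtype ⁅(⊤ : Subgroup ↥H), ⊤⁆ := (Subgroup.map_commutator _ _ _).symm
    _ = Subgroup.map H.subtype ⊤ := by rw [← _root_.commutator_def, hperf]
    _ = H := h1

theorem QSrel (P N : Subgroup G) (hperf : _root_.commutator ↥P = ⊤)
    (hsimp : IsSimpleGroup (↥P ⧸ center ↥P)) (hNP : N ≤ P) (hrel : RelNorm N P) :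
    N = P ∨ ⁅P, N⁆ = ⊥ := by
  have hnorm : (N.subgroupOf P).Normal := by
    constructor
    intro n hn g
    rw [Subgroup.mem_subgroupOf] at hn ⊢
    simpa using hrel ↑g g.2 ↑n hn
  rcases QSnormal hperf hsimp _ hnorm with h | h
  · left
    exact le_antisymm hNP (Subgroup.subgroupOf_eq_top.1 h)
  · right
    rw [eq_bot_iff, Subgroup.commutator_le]
    intro p hp q hq
    have hc : (⟨q, hNP hq⟩ : ↥P) ∈ center ↥P := h (Subgroup.mem_subgroupOf.2 hq)
    have := Subgroup.mem_center_iff.1 hc ⟨p, hp⟩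
    have hpq : p * q = q * p := congrArg Subtype.val this
    rw [Subgroup.mem_bot, commutatorElement_eq_one_iff_mul_comm]
    exact hpq

theorem lemA : ∀ (n : ℕ) (H K N : Subgroup G), RelSN n H K →
    _root_.commutator ↥H = ⊤ → IsSimpleGroup (↥H ⧸ center ↥H) →
    N ≤ K → RelNorm N K → H ≤ N ∨ ⁅H, N⁆ = ⊥ := by
  intro n
  induction n with
  | zero =>
    intro H K N hsn hperf hsimp hNK hrel
    have hHK : H = K := hsn
    subst hHK
    rcases QSrel H N hperf hsimp hNK hrel with h | h
    · left; exact h.ge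
    · right; exact h
  | succ n ih =>
    intro H K N hsn hperf hsimp hNK hrel
    obtain ⟨L, hLK, hLnorm, hsn'⟩ := hsn
    have hHL : H ≤ L := relSN_le hsn'
    have hrel' : RelNorm (N ⊓ L) L := by
      rintro g hg x ⟨hx1, hx2⟩
      exact ⟨hrel g (hLK hg) x hx1, L.mul_mem (L.mul_mem hg hx2) (L.inv_mem hg)⟩
    rcases ih H L (N ⊓ L) hsn' hperf hsimp inf_le_right hrel' with h | h
    · left; exact h.trans inf_le_left
    · right
      have h1 : ⁅H, N⁆ ≤ N ⊓ L := by
        rw [Subgroup.commutator_le]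
        intro p hp q hq
        constructor
        · rw [commutatorElement_def]
          exact N.mul_mem (hrel p (hLK (hHL hp)) q hq) (N.inv_mem hq)
        · have : p * (q * p⁻¹ * q⁻¹) ∈ L :=
            L.mul_mem (hHL hp) (hLnorm q (hNK hq) p⁻¹ (L.inv_mem (hHL hp)))
          simpa [commutatorElement_def, mul_assoc] using this
      have h2 : ⁅N, H⁆ ≤ N ⊓ L := by
        rw [Subgroup.commutator_le]
        intro q hq p hp
        constructor
        · have : q * (p * q⁻¹ * p⁻¹) ∈ N :=
            N.mul_mem hq (hrel p (hLK (hHL hp)) q⁻¹ (N.inv_mem hq))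
          simpa [commutatorElement_def, mul_assoc] using this
        · have : (q * p * q⁻¹) * p⁻¹ ∈ L :=
            L.mul_mem (hLnorm q (hNK hq) p (hHL hp)) (L.inv_mem (hHL hp))
          simpa [commutatorElement_def, mul_assoc] using this
      have hswap : ⁅N ⊓ L, H⁆ = ⊥ := comm_bot_swap h
      have t1 : ⁅⁅H, N⁆, H⁆ = ⊥ :=
        le_bot_iff.1 ((Subgroup.commutator_mono h1 le_rfl).trans hswap.le)
      have t2 : ⁅⁅N, H⁆, H⁆ = ⊥ :=
        le_bot_iff.1 ((Subgroup.commutator_mono h2 le_rfl).trans hswap.le)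
      have t3 : ⁅⁅H, H⁆, N⁆ = ⊥ :=
        Subgroup.commutator_commutator_eq_bot_of_rotate t1 t2
      rwa [perfsub hperf] at t3

theorem lemB : ∀ (m n : ℕ) (H K Q : Subgroup G), RelSN n Q K → RelSN m H K →
    _root_.commutator ↥Q = ⊤ → IsSimpleGroup (↥Q ⧸ center ↥Q) →
    Q ≤ H ∨ ⁅Q, H⁆ = ⊥ := by
  intro m
  induction m with
  | zero =>
    intro n H K Q hQ hH hperf hsimp
    have : H = K := hH
    subst this
    left; exact relSN_le hQ
  | succ m ih =>
    intro n H K Q hQ hH hperf hsimp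
    obtain ⟨L, hLK, hLnorm, hsnH⟩ := hH
    rcases lemA n Q K L hQ hperf hsimp hLK hLnorm with h | h
    · exact ih n H L Q (relSN_of_le hQ h hLK) hsnH hperf hsimp
    · right
      exact le_bot_iff.1 ((Subgroup.commutator_mono le_rfl (relSN_le hsnH)).trans h.le)

theorem SNQS : ∀ (n : ℕ) (H P : Subgroup G), RelSN n H P →
    _root_.commutator ↥P = ⊤ → IsSimpleGroup (↥P ⧸ center ↥P) →
    H = P ∨ ⁅P, H⁆ = ⊥ := by
  intro n
  induction n with
  | zero => intro H P h _ _; left; exact h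
  | succ n ih =>
    intro H P h hperf hsimp
    obtain ⟨L, hLP, hLnorm, hsn⟩ := h
    rcases QSrel P L hperf hsimp hLP hLnorm with h | h
    · subst h
      exact ih H L hsn hperf hsimp
    · right
      exact le_bot_iff.1 ((Subgroup.commutator_mono le_rfl (relSN_le hsn)).trans h.le)

end QS


theorem kegel_finite {K : Type*} [Group K] [Finite K] [Group.IsSolvable K] (F : Subgroup K)
    (hF : ∀ x ∈ F, x ≠ 1 → ∀ y ∈ F, ∀ N : Subgroup K, N.Normal → x ∈ N → y ∈ N)
    (a b : K) (ha : a ∈ F) (hb : b ∈ F) (ha1 : a ≠ 1) : ⁅a, b⁆ = 1 := by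
  classical
  haveI : Finite (Subgroup K) :=
    Finite.of_injective (fun H => (H : Set K)) SetLike.coe_injective
  have hfin : ({M : Subgroup K | M.Normal ∧ ∀ f ∈ M, f ∈ F → f = 1}).Finite := Set.toFinite _
  obtain ⟨M, hM𝒮, hMmax⟩ := Set.Finite.exists_maximalFor id _ hfin
    ⟨⊥, inferInstance, fun f hf _ => Subgroup.mem_bot.1 hf⟩
  obtain ⟨hMnorm, hMF⟩ := hM𝒮
  haveI := hMnorm
  have haM : a ∉ M := fun h => ha1 (hMF a h ha)
  obtain ⟨nsol, hnsol⟩ := Group.IsSolvable.solvable (G := K)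
  have hex : ∃ k, M ⊔ derivedSeries K k = M := ⟨nsol, by rw [hnsol, sup_bot_eq]⟩
  set j := Nat.find hex with hjdef
  have hj : M ⊔ derivedSeries K j = M := Nat.find_spec hex
  have hj0 : j ≠ 0 := by
    intro h
    rw [h, derivedSeries_zero, sup_top_eq] at hj
    exact haM (hj ▸ Subgroup.mem_top a)
  have hNne : M ⊔ derivedSeries K (j - 1) ≠ M := Nat.find_min hex (by omega)
  haveI hNnorm : (M ⊔ derivedSeries K (j - 1)).Normal := @Subgroup.sup_normal _ _ M _ hMnorm (derivedSeries_normal _ _)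
  have step : ∀ k, ⁅M ⊔ derivedSeries K k, M ⊔ derivedSeries K k⁆ ≤ M ⊔ derivedSeries K (k + 1) := by
    intro k
    have h2 : map (QuotientGroup.mk' M) ⁅M ⊔ derivedSeries K k, M ⊔ derivedSeries K k⁆ =
        map (QuotientGroup.mk' M) (derivedSeries K (k + 1)) := by
      rw [Subgroup.map_commutator]
      have hbot : map (QuotientGroup.mk' M) M = ⊥ := by
        rw [Subgroup.map_eq_bot_iff, QuotientGroup.ker_mk']
      rw [Subgroup.map_sup, hbot, bot_sup_eq, ← Subgroup.map_commutator, derivedSeries_succ]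
    calc ⁅M ⊔ derivedSeries K k, M ⊔ derivedSeries K k⁆
        ≤ comap (QuotientGroup.mk' M) (map (QuotientGroup.mk' M)
            ⁅M ⊔ derivedSeries K k, M ⊔ derivedSeries K k⁆) := Subgroup.le_comap_map _ _
      _ = comap (QuotientGroup.mk' M) (map (QuotientGroup.mk' M) (derivedSeries K (k + 1))) := by
            rw [h2]
      _ = derivedSeries K (k + 1) ⊔ M := by
            rw [Subgroup.comap_map_eq, QuotientGroup.ker_mk']
      _ = M ⊔ derivedSeries K (k + 1) := sup_comm _ _
  have hcomm : ⁅M ⊔ derivedSeries K (j - 1), M ⊔ derivedSeries K (j - 1)⁆ ≤ M := by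
    have := step (j - 1)
    rwa [Nat.sub_add_cancel (Nat.one_le_iff_ne_zero.2 hj0), hj] at this
  have hbad : ¬ (∀ f ∈ M ⊔ derivedSeries K (j - 1), f ∈ F → f = 1) := by
    intro hgood
    exact hNne (le_antisymm (hMmax ⟨hNnorm, hgood⟩ le_sup_left) le_sup_left)
  push_neg at hbad
  obtain ⟨x, hxN, hxF, hx1⟩ := hbad
  have haN : a ∈ M ⊔ derivedSeries K (j - 1) := hF x hxF hx1 a ha _ hNnorm hxN
  have hbN : b ∈ M ⊔ derivedSeries K (j - 1) := hF x hxF hx1 b hb _ hNnorm hxN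
  have habF : ⁅a, b⁆ ∈ F := by
    rw [commutatorElement_def]
    exact F.mul_mem (F.mul_mem (F.mul_mem ha hb) (F.inv_mem ha)) (F.inv_mem hb)
  exact hMF _ (hcomm (Subgroup.commutator_mem_commutator haN hbN)) habF


theorem exists_finset_of_mem_closure {S : Type*} [Group S] {s : Set S} {y : S}
    (h : y ∈ Subgroup.closure s) : ∃ t : Finset S, ↑t ⊆ s ∧ y ∈ Subgroup.closure (t : Set S) := by
  classical
  refine Subgroup.closure_induction (fun x hx => ?_) ?_ (fun x y _ _ hx hy => ?_)
    (fun x _ hx => ?_) h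
  · exact ⟨{x}, by simpa using hx, Subgroup.subset_closure (by simp)⟩
  · exact ⟨∅, by simp, Subgroup.one_mem _⟩
  · obtain ⟨t1, h1, m1⟩ := hx
    obtain ⟨t2, h2, m2⟩ := hy
    exact ⟨t1 ∪ t2, by simp [Set.union_subset_iff, h1, h2],
      Subgroup.mul_mem _ (Subgroup.closure_mono (by simp) m1)
        (Subgroup.closure_mono (by simp) m2)⟩
  · obtain ⟨t, h1, m1⟩ := hx
    exact ⟨t, h1, Subgroup.inv_mem _ m1⟩

theorem simple_lf_ls_comm {S : Type*} [Group S] (hfin : LocallyFiniteGroup S)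
    (hsol : LocallySolvable S) (hsimp : IsSimpleGroup S) (a b : S) : a * b = b * a := by
  classical
  by_cases ha1 : a = 1
  · subst ha1; simp
  set F := Subgroup.closure ({a, b} : Set S) with hFdef
  have hFfin : (F : Set S).Finite := by
    have := hfin ({a, b} : Finset S)
    simpa using this
  have hP : ∀ x y : S, ∃ W : Set S, W.Finite ∧
      (x ≠ 1 → y ∈ Subgroup.closure ((fun g => g * x * g⁻¹) '' W)) := by
    intro x y
    by_cases hx : x = 1
    · exact ⟨∅, Set.finite_empty, fun h => absurd hx h⟩
    · have hy : y ∈ Subgroup.normalClosure ({x} : Set S) := by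
        have hnc : Subgroup.normalClosure ({x} : Set S) = ⊤ := by
          rcases hsimp.eq_bot_or_eq_top_of_normal _ Subgroup.normalClosure_normal with h | h
          · exfalso
            have := Subgroup.subset_normalClosure (s := ({x} : Set S)) (Set.mem_singleton x)
            rw [h] at this
            exact hx (Subgroup.mem_bot.1 this)
          · exact h
        rw [hnc]; trivial
      rw [Subgroup.normalClosure] at hy
      obtain ⟨t, hts, hyt⟩ := exists_finset_of_mem_closure hy
      have hch : ∀ c ∈ (t : Set S), ∃ g : S, g * x * g⁻¹ = c := by
        intro c hc
        have h2 := hts hc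
        rw [Group.mem_conjugatesOfSet_iff] at h2
        obtain ⟨u, hu, hconj⟩ := h2
        rw [Set.mem_singleton_iff] at hu; subst hu
        obtain ⟨g, hg⟩ := isConj_iff.1 hconj
        exact ⟨g, hg⟩
      set pick : S → S := fun c =>
        if h : ∃ g : S, g * x * g⁻¹ = c then Classical.choose h else 1 with hpick
      refine ⟨pick '' ↑t, t.finite_toSet.image _, fun _ => ?_⟩
      refine Subgroup.closure_mono ?_ hyt
      intro c hc
      have hex : ∃ g : S, g * x * g⁻¹ = c := hch c hc
      refine ⟨pick c, Set.mem_image_of_mem _ hc, ?_⟩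
      simp only [hpick, dif_pos hex]
      exact Classical.choose_spec hex
  choose W hWfin hWmem using hP
  set U : Set S := {a, b} ∪ ⋃ x ∈ (F : Set S), ⋃ y ∈ (F : Set S), W x y with hUdef
  have hUfin : U.Finite :=
    Set.Finite.union ((Set.finite_singleton b).insert a)
      (hFfin.biUnion fun x _ => hFfin.biUnion fun y _ => hWfin x y)
  set H := Subgroup.closure U with hHdef
  have hUH : U ⊆ H := Subgroup.subset_closure
  have hHfin : (H : Set S).Finite := by
    have := hfin hUfin.toFinset
    rwa [Set.Finite.coe_toFinset] at this
  have hHsol : Group.IsSolvable ↥H := by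
    have := hsol hUfin.toFinset
    rwa [Set.Finite.coe_toFinset] at this
  have hFH : F ≤ H := by
    rw [hFdef]
    exact Subgroup.closure_le H |>.2 (fun z hz => hUH (Or.inl hz))
  haveI : Finite ↥H := hHfin.to_subtype
  have hkey : ∀ x' ∈ F.subgroupOf H, x' ≠ 1 → ∀ y' ∈ F.subgroupOf H,
      ∀ N : Subgroup ↥H, N.Normal → x' ∈ N → y' ∈ N := by
    intro x' hx' hx1 y' hy' N hN hxN
    have hxF : (x' : S) ∈ F := Subgroup.mem_subgroupOf.1 hx'
    have hyF : (y' : S) ∈ F := Subgroup.mem_subgroupOf.1 hy'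
    have hx1' : (x' : S) ≠ 1 := fun h => hx1 (Subtype.ext h)
    have hmem := hWmem (x' : S) (y' : S) hx1'
    have himg : ((fun g => g * (x' : S) * g⁻¹) '' W (x' : S) (y' : S)) ⊆
        (Subgroup.map H.subtype N : Set S) := by
      rintro _ ⟨g, hgW, rfl⟩
      have hgH : g ∈ H := hUH (Or.inr (Set.mem_biUnion hxF (Set.mem_biUnion hyF hgW)))
      have hconj : (⟨g, hgH⟩ : ↥H) * x' * (⟨g, hgH⟩ : ↥H)⁻¹ ∈ N := hN.conj_mem x' hxN ⟨g, hgH⟩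
      exact ⟨_, hconj, rfl⟩
    have hyN : (y' : S) ∈ Subgroup.map H.subtype N :=
      (Subgroup.closure_le _).2 himg hmem
    obtain ⟨n, hnN, hn⟩ := hyN
    rwa [← Subtype.ext hn]
  have haF : a ∈ F := Subgroup.subset_closure (Or.inl rfl)
  have hbF : b ∈ F := Subgroup.subset_closure (Or.inr rfl)
  have haH : a ∈ H := hFH haF
  have hbH : b ∈ H := hFH hbF
  have hk := kegel_finite (F.subgroupOf H) hkey ⟨a, haH⟩ ⟨b, hbH⟩
    (Subgroup.mem_subgroupOf.2 haF) (Subgroup.mem_subgroupOf.2 hbF)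
    (fun h => ha1 (congrArg Subtype.val h))
  rw [commutatorElement_def] at hk
  have := congrArg Subtype.val hk
  push_cast at this
  rw [← commutatorElement_eq_one_iff_mul_comm, commutatorElement_def]
  exact this


theorem lf_subgroup {G : Type*} [Group G] (hG : LocallyFiniteGroup G) (H : Subgroup G) :
    LocallyFiniteGroup ↥H := by
  intro S
  classical
  have hGfin : (Subgroup.closure ((S.image (fun x : ↥H => (x : G))) : Set G) : Set G).Finite :=
    hG _
  have hsub : (Subgroup.closure (S : Set ↥H) : Set ↥H) ⊆
      Subtype.val ⁻¹' (Subgroup.closure ((S.image (fun x : ↥H => (x : G))) : Set G) : Set G) := by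
    intro x hx
    have : (x : G) ∈ Subgroup.map H.subtype (Subgroup.closure (S : Set ↥H)) :=
      ⟨x, hx, rfl⟩
    rw [MonoidHom.map_closure] at this
    simpa [Finset.coe_image] using this
  exact Set.Finite.subset (hGfin.preimage Subtype.val_injective.injOn) hsub

theorem ls_subgroup {G : Type*} [Group G] {R : Subgroup G} (hR : LocallySolvable ↥R)
    {H : Subgroup G} (hHR : H ≤ R) : LocallySolvable ↥H := by
  intro S
  classical
  set inc := Subgroup.inclusion hHR with hincdef
  have hinj : Function.Injective inc := Subgroup.inclusion_injective hHR
  have h1 : Subgroup.map inc (Subgroup.closure (S : Set ↥H)) =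
      Subgroup.closure ((S.image inc : Finset ↥R) : Set ↥R) := by
    rw [MonoidHom.map_closure, Finset.coe_image]
  haveI : Group.IsSolvable ↥(Subgroup.map inc (Subgroup.closure (S : Set ↥H))) := by
    rw [h1]; exact hR _
  exact solvable_of_solvable_injective
    (f := (Subgroup.equivMapOfInjective (Subgroup.closure (S : Set ↥H)) inc hinj).toMonoidHom)
    (Subgroup.equivMapOfInjective (Subgroup.closure (S : Set ↥H)) inc hinj).injective

theorem lf_surj {X Y : Type*} [Group X] [Group Y] (f : X →* Y) (hf : Surjective f)
    (hX : LocallyFiniteGroup X) : LocallyFiniteGroup Y := by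
  intro S
  classical
  have h1 : Subgroup.closure (S : Set Y) =
      Subgroup.map f (Subgroup.closure ((S.image (surjInv hf) : Finset X) : Set X)) := by
    rw [MonoidHom.map_closure, Finset.coe_image, Set.image_image]
    congr 1
    ext y
    simp [surjInv_eq hf]
  rw [h1, Subgroup.coe_map]
  exact (hX _).image f

theorem ls_surj {X Y : Type*} [Group X] [Group Y] (f : X →* Y) (hf : Surjective f)
    (hX : LocallySolvable X) : LocallySolvable Y := by
  intro S
  classical
  have h1 : Subgroup.closure (S : Set Y) =
      Subgroup.map f (Subgroup.closure ((S.image (surjInv hf) : Finset X) : Set X)) := by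
    rw [MonoidHom.map_closure, Finset.coe_image, Set.image_image]
    congr 1
    ext y
    simp [surjInv_eq hf]
  rw [h1]
  haveI : Group.IsSolvable ↥(Subgroup.closure ((S.image (surjInv hf) : Finset X) : Set X)) := hX (S.image (surjInv hf))
  exact solvable_of_surjective (MonoidHom.subgroupMap_surjective f _)

theorem commutator_top_of_equiv {X Y : Type*} [Group X] [Group Y] (e : X ≃* Y)
    (h : _root_.commutator X = ⊤) : _root_.commutator Y = ⊤ := by
  rw [_root_.commutator_def] at h ⊢
  have h2 := congrArg (Subgroup.map e.toMonoidHom) h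
  rwa [Subgroup.map_commutator, Subgroup.map_top_of_surjective _ e.surjective] at h2

theorem center_map_equiv {X Y : Type*} [Group X] [Group Y] (e : X ≃* Y) :
    Subgroup.map e.toMonoidHom (Subgroup.center X) = Subgroup.center Y := by
  ext y
  simp only [Subgroup.mem_map]
  constructor
  · rintro ⟨x, hx, rfl⟩
    rw [Subgroup.mem_center_iff] at hx ⊢
    intro z
    have h2 := congrArg e (hx (e.symm z))
    simpa [map_mul] using h2
  · intro hy
    refine ⟨e.symm y, ?_, by simp⟩
    rw [Subgroup.mem_center_iff] at hy ⊢
    intro w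
    apply e.injective
    simpa [map_mul] using hy (e w)

theorem isSimpleGroup_of_equiv {X Y : Type*} [Group X] [Group Y] (e : X ≃* Y)
    (h : IsSimpleGroup X) : IsSimpleGroup Y := by
  obtain ⟨x1, x2, hne⟩ := h.exists_pair_ne
  refine @IsSimpleGroup.mk Y _ ⟨⟨e x1, e x2, fun hh => hne (e.injective hh)⟩⟩ ?_
  intro N hN
  rcases h.eq_bot_or_eq_top_of_normal _ (hN.comap e.toMonoidHom) with h' | h'
  · left
    have h2 := congrArg (Subgroup.map e.toMonoidHom) h'
    rwa [Subgroup.map_comap_eq_self_of_surjective e.surjective, Subgroup.map_bot] at h2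
  · right
    have h2 := congrArg (Subgroup.map e.toMonoidHom) h'
    rwa [Subgroup.map_comap_eq_self_of_surjective e.surjective,
      Subgroup.map_top_of_surjective _ e.surjective] at h2

theorem quotient_center_simple_of_equiv {X Y : Type*} [Group X] [Group Y] (e : X ≃* Y)
    (h : IsSimpleGroup (X ⧸ Subgroup.center X)) : IsSimpleGroup (Y ⧸ Subgroup.center Y) :=
  isSimpleGroup_of_equiv (QuotientGroup.congr (Subgroup.center X) (Subgroup.center Y) e
    (center_map_equiv e)) h


section main
variable {G : Type*} [Group G]

/-- Chains convert to `RelSN`. -/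
theorem chain_to_relSN : ∀ (n : ℕ) (c : Fin (n + 1) → Subgroup G),
    (∀ i : Fin n, c i.castSucc ≤ c i.succ ∧ RelNorm (c i.castSucc) (c i.succ)) →
    RelSN n (c 0) (c (Fin.last n)) := by
  intro n
  induction n with
  | zero => intro c _; rfl
  | succ n ih =>
    intro c hc
    have hstep := hc (Fin.last n)
    rw [Fin.succ_last] at hstep
    refine ⟨c (Fin.last n).castSucc, hstep.1, hstep.2, ?_⟩
    have := ih (fun i => c i.castSucc) (fun i => by
      have h := hc i.castSucc
      rwa [Fin.succ_castSucc] at h)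
    simpa using this

theorem isSubnormal_relSN {H : Subgroup G} (h : _root_.IsSubnormal H) : ∃ n, RelSN n H (⊤ : Subgroup G) := by
  obtain ⟨n, c, hc0, hctop, hstep⟩ := h
  refine ⟨n, ?_⟩
  have := chain_to_relSN n c (fun i => ⟨(hstep i).1, ?_⟩)
  · rwa [hc0, hctop] at this
  · intro g hg x hx
    have hnorm := (hstep i).2
    have := hnorm.conj_mem ⟨x, (hstep i).1 hx⟩ (Subgroup.mem_subgroupOf.2 hx) ⟨g, hg⟩
    exact Subgroup.mem_subgroupOf.1 this

theorem relNorm_conj (y : G) {H K : Subgroup G} (h : RelNorm H K) :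
    RelNorm (H.map (MulAut.conj y).toMonoidHom) (K.map (MulAut.conj y).toMonoidHom) := by
  rintro _ ⟨g, hg, rfl⟩ _ ⟨x, hx, rfl⟩
  refine ⟨g * x * g⁻¹, h g hg x hx, ?_⟩
  simp [MulAut.conj_apply, mul_assoc]

theorem relSN_conj (y : G) : ∀ (n : ℕ) (H K : Subgroup G), RelSN n H K →
    RelSN n (H.map (MulAut.conj y).toMonoidHom) (K.map (MulAut.conj y).toMonoidHom) := by
  intro n
  induction n with
  | zero => intro H K h; exact congrArg _ h
  | succ n ih =>
    rintro H K ⟨L, hLK, hLnorm, hsn⟩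
    exact ⟨L.map (MulAut.conj y).toMonoidHom, Subgroup.map_mono hLK, relNorm_conj y hLnorm,
      ih H L hsn⟩

theorem map_conj_eq_of_mem_normalizer {Q : Subgroup G} {y : G} (hy : y ∈ (Subgroup.normalizer (Q : Set G))) :
    Q.map (MulAut.conj y).toMonoidHom = Q := by
  ext x
  constructor
  · rintro ⟨q, hq, rfl⟩
    exact (Subgroup.mem_normalizer_iff.1 hy q).1 hq
  · intro hx
    refine ⟨y⁻¹ * x * y, ?_, by simp [MulAut.conj_apply, mul_assoc]⟩
    have := (Subgroup.mem_normalizer_iff.1 hy (y⁻¹ * x * y)).2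
    apply this
    have hxy : y * (y⁻¹ * x * y) * y⁻¹ = x := by group
    rwa [hxy]

theorem mem_normalizer_of_map_conj_eq {Q : Subgroup G} {y : G}
    (h : Q.map (MulAut.conj y).toMonoidHom = Q) : y ∈ (Subgroup.normalizer (Q : Set G)) := by
  rw [Subgroup.mem_normalizer_iff]
  intro g
  constructor
  · intro hg
    rw [← h]
    exact ⟨g, hg, rfl⟩
  · intro hg
    rw [← h] at hg
    obtain ⟨q, hq, hqe⟩ := hg
    have : q = g := by
      have : y * q * y⁻¹ = y * g * y⁻¹ := hqe
      exact mul_left_cancel (mul_right_cancel this)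
    rwa [← this]

theorem conj_comm_square {X Y : Type*} [Group X] [Group Y] (π : X →* Y) (g : X) :
    ((MulAut.conj (π g)).toMonoidHom).comp π = π.comp (MulAut.conj g).toMonoidHom := by
  ext x
  simp [MulAut.conj_apply]

theorem map_normalizer_mem {X Y : Type*} [Group X] [Group Y] (π : X →* Y) (Q : Subgroup X)
    {g : X} (hg : g ∈ Subgroup.normalizer (Q : Set X)) : π g ∈ (Subgroup.normalizer ((Q.map π : Subgroup Y) : Set Y)) := by
  apply mem_normalizer_of_map_conj_eq
  rw [Subgroup.map_map, conj_comm_square, ← Subgroup.map_map,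
    map_conj_eq_of_mem_normalizer hg]

theorem no_quasisimple_locsol (hG : LocallyFiniteGroup G) {Q R : Subgroup G}
    (hQR : Q ≤ R) (hRls : LocallySolvable ↥R)
    (hperf : _root_.commutator ↥Q = ⊤) (hsimp : IsSimpleGroup (↥Q ⧸ center ↥Q)) : False := by
  have hQlf : LocallyFiniteGroup ↥Q := lf_subgroup hG Q
  have hQls : LocallySolvable ↥Q := ls_subgroup hRls hQR
  have hlf2 : LocallyFiniteGroup (↥Q ⧸ center ↥Q) :=
    lf_surj (QuotientGroup.mk' (center ↥Q)) (QuotientGroup.mk'_surjective _) hQlf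
  have hls2 : LocallySolvable (↥Q ⧸ center ↥Q) :=
    ls_surj (QuotientGroup.mk' (center ↥Q)) (QuotientGroup.mk'_surjective _) hQls
  have hcomm := simple_lf_ls_comm hlf2 hls2 hsimp
  have hq_perf : _root_.commutator (↥Q ⧸ center ↥Q) = ⊤ := by
    rw [_root_.commutator_def]
    calc ⁅(⊤ : Subgroup (↥Q ⧸ center ↥Q)), ⊤⁆
        = ⁅Subgroup.map (QuotientGroup.mk' (center ↥Q)) ⊤,
            Subgroup.map (QuotientGroup.mk' (center ↥Q)) ⊤⁆ := by
          rw [Subgroup.map_top_of_surjective _ (QuotientGroup.mk'_surjective _)]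
      _ = Subgroup.map (QuotientGroup.mk' (center ↥Q)) ⁅⊤, ⊤⁆ :=
          (Subgroup.map_commutator _ _ _).symm
      _ = ⊤ := by
          rw [← _root_.commutator_def, hperf,
            Subgroup.map_top_of_surjective _ (QuotientGroup.mk'_surjective _)]
  have hq_bot : _root_.commutator (↥Q ⧸ center ↥Q) = ⊥ := by
    rw [_root_.commutator_def, eq_bot_iff, Subgroup.commutator_le]
    intro g _ h _
    rw [Subgroup.mem_bot, commutatorElement_eq_one_iff_mul_comm]
    exact hcomm g h
  obtain ⟨u, v, huv⟩ := hsimp.exists_pair_ne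
  apply huv
  have hu : u ∈ (⊥ : Subgroup (↥Q ⧸ center ↥Q)) := by rw [← hq_bot, hq_perf]; trivial
  have hv : v ∈ (⊥ : Subgroup (↥Q ⧸ center ↥Q)) := by rw [← hq_bot, hq_perf]; trivial
  rw [Subgroup.mem_bot] at hu hv
  rw [hu, hv]

theorem inf_R_central (hG : LocallyFiniteGroup G) (Q R : Subgroup G) [hR : R.Normal]
    (hRls : LocallySolvable ↥R)
    (hperf : _root_.commutator ↥Q = ⊤) (hsimp : IsSimpleGroup (↥Q ⧸ center ↥Q)) :
    ∀ x ∈ Q ⊓ R, ∀ q ∈ Q, x * q = q * x := by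
  have hnorm : ((Q ⊓ R).subgroupOf Q).Normal := by
    constructor
    intro n hn g
    rw [Subgroup.mem_subgroupOf] at hn ⊢
    refine ⟨Q.mul_mem (Q.mul_mem g.2 hn.1) (Q.inv_mem g.2), ?_⟩
    exact hR.conj_mem _ hn.2 _
  rcases QSnormal hperf hsimp _ hnorm with h | h
  · exfalso
    exact no_quasisimple_locsol hG
      (le_trans (Subgroup.subgroupOf_eq_top.1 h) inf_le_right) hRls hperf hsimp
  · intro x hx q hq
    have hc : (⟨x, hx.1⟩ : ↥Q) ∈ center ↥Q := h (Subgroup.mem_subgroupOf.2 hx)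
    have := Subgroup.mem_center_iff.1 hc ⟨q, hq⟩
    exact (congrArg Subtype.val this).symm

theorem ker_side (hG : LocallyFiniteGroup G) (Q R : Subgroup G) [hR : R.Normal]
    (hRls : LocallySolvable ↥R)
    (hperf : _root_.commutator ↥Q = ⊤) (hsimp : IsSimpleGroup (↥Q ⧸ center ↥Q))
    (g : G) (hgn : g ∈ (Subgroup.normalizer (Q : Set G)))
    (hgc : (QuotientGroup.mk' R) g ∈
      Subgroup.centralizer ((Q.map (QuotientGroup.mk' R) : Subgroup (G ⧸ R)) : Set (G ⧸ R))) :
    g ∈ Subgroup.centralizer (Q : Set G) := by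
  have hcen := inf_R_central hG Q R hRls hperf hsimp
  rw [Subgroup.mem_centralizer_iff] at hgc
  have hcm : ∀ q ∈ Q, ⁅g, q⁆ ∈ Q ⊓ R := by
    intro q hq
    constructor
    · rw [commutatorElement_def]
      exact Q.mul_mem ((Subgroup.mem_normalizer_iff.1 hgn q).1 hq) (Q.inv_mem hq)
    · have hcomm : (QuotientGroup.mk' R) q * (QuotientGroup.mk' R) g =
          (QuotientGroup.mk' R) g * (QuotientGroup.mk' R) q :=
        hgc _ ⟨q, hq, rfl⟩
      have h1 : (QuotientGroup.mk' R) ⁅g, q⁆ = 1 := by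
        rw [map_commutatorElement, commutatorElement_eq_one_iff_mul_comm]
        exact hcomm.symm
      rw [← QuotientGroup.ker_mk' R]
      exact h1
  -- the homomorphism q ↦ [g, q] into the center of Q
  have hker : ∀ q ∈ Q, ⁅g, q⁆ = 1 := by
    have hcentermem : ∀ q : ↥Q, (⟨⁅g, (q : G)⁆, (hcm _ q.2).1⟩ : ↥Q) ∈ center ↥Q := by
      intro q
      rw [Subgroup.mem_center_iff]
      intro w
      apply Subtype.ext
      exact (hcen _ (hcm _ q.2) _ w.2).symm
    let φ : ↥Q →* ↥(center ↥Q) :=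
      { toFun := fun q => ⟨⟨⁅g, (q : G)⁆, (hcm _ q.2).1⟩, hcentermem q⟩
        map_one' := by
          ext
          simp [commutatorElement_def]
        map_mul' := by
          intro q₁ q₂
          ext
          show ⁅g, ((q₁ : G) * q₂)⁆ = ⁅g, (q₁ : G)⁆ * ⁅g, (q₂ : G)⁆
          have hid : ⁅g, ((q₁ : G) * q₂)⁆ =
              ⁅g, (q₁ : G)⁆ * ((q₁ : G) * ⁅g, (q₂ : G)⁆ * (q₁ : G)⁻¹) := by
            rw [commutatorElement_def, commutatorElement_def, commutatorElement_def]
            group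
          rw [hid, ← hcen _ (hcm _ q₂.2) _ q₁.2]
          group }
    have hsub : _root_.commutator ↥Q ≤ φ.ker := by
      rw [_root_.commutator_def, Subgroup.commutator_le]
      intro a _ b _
      rw [MonoidHom.mem_ker, map_commutatorElement, commutatorElement_eq_one_iff_mul_comm]
      exact Subtype.ext (Subgroup.mem_center_iff.1 (φ b).2 (φ a))
    rw [hperf] at hsub
    intro q hq
    have : φ ⟨q, hq⟩ = 1 := hsub (Subgroup.mem_top _)
    have h2 := congrArg Subtype.val (congrArg Subtype.val this)
    exact h2
  rw [Subgroup.mem_centralizer_iff]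
  intro q hq
  have := hker q hq
  rw [commutatorElement_eq_one_iff_mul_comm] at this
  exact this.symm

theorem key_normalizer (hG : LocallyFiniteGroup G) (Q R : Subgroup G) [hR : R.Normal]
    (hRls : LocallySolvable ↥R) (hsn : ∃ n, RelSN n Q (⊤ : Subgroup G))
    (hperf : _root_.commutator ↥Q = ⊤) (hsimp : IsSimpleGroup (↥Q ⧸ center ↥Q))
    (y : G) (hy : (QuotientGroup.mk' R) y ∈ (Subgroup.normalizer ((Q.map (QuotientGroup.mk' R) : Subgroup (G ⧸ R)) : Set (G ⧸ R)))) :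
    y ∈ (Subgroup.normalizer (Q : Set G)) := by
  set π := QuotientGroup.mk' R with hπ
  set Q' := Q.map (MulAut.conj y).toMonoidHom with hQ'
  by_cases hQQ : Q' = Q
  · exact mem_normalizer_of_map_conj_eq hQQ
  exfalso
  obtain ⟨n, hsnQ⟩ := hsn
  have hsnQ' : RelSN n Q' (⊤ : Subgroup G) := by
    have := relSN_conj y n Q ⊤ hsnQ
    rwa [Subgroup.map_top_of_surjective _ (MulAut.conj y).surjective] at this
  have e : ↥Q ≃* ↥Q' := Subgroup.equivMapOfInjective Q _ (MulAut.conj y).injective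
  have hperf' : _root_.commutator ↥Q' = ⊤ := commutator_top_of_equiv e hperf
  have hsimp' : IsSimpleGroup (↥Q' ⧸ center ↥Q') := quotient_center_simple_of_equiv e hsimp
  have hmapQ' : Q'.map π = Q.map π := by
    rw [hQ', Subgroup.map_map, ← conj_comm_square, ← Subgroup.map_map,
      map_conj_eq_of_mem_normalizer hy]
  have hnontriv : Q ≠ ⊥ := by
    intro hbot
    haveI : Subsingleton ↥Q := by rw [hbot]; infer_instance
    haveI : Subsingleton (↥Q ⧸ center ↥Q) := Quotient.instSubsingletonQuotient _
    obtain ⟨u, v, huv⟩ := hsimp.exists_pair_ne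
    exact huv (Subsingleton.elim u v)
  rcases lemB n n Q' ⊤ Q hsnQ hsnQ' hperf hsimp with hle | hcom
  · have hsnQL : RelSN n Q Q' := relSN_of_le hsnQ hle le_top
    rcases SNQS n Q Q' hsnQL hperf' hsimp' with heq | hcb
    · exact hQQ heq.symm
    · apply hnontriv
      rw [← perfsub hperf]
      exact le_bot_iff.1 ((Subgroup.commutator_mono hle le_rfl).trans hcb.le)
  · have hmap : Subgroup.map π Q = ⊥ := by
      have h2 : ⁅Q.map π, Q.map π⁆ = ⊥ := by
        have h3 := congrArg (Subgroup.map π) hcom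
        rwa [Subgroup.map_commutator, hmapQ', Subgroup.map_bot] at h3
      calc Subgroup.map π Q = Subgroup.map π ⁅Q, Q⁆ := by rw [perfsub hperf]
        _ = ⁅Q.map π, Q.map π⁆ := Subgroup.map_commutator _ _ _
        _ = ⊥ := h2
    have hQR : Q ≤ R := by
      rw [Subgroup.map_eq_bot_iff, hπ, QuotientGroup.ker_mk'] at hmap
      exact hmap
    exact no_quasisimple_locsol hG hQR hRls hperf hsimp

end main


end AuxComponentIso

open Subgroup Function

theorem inducedAutomorphisms_of_component_iso
    (G : Type*) [Group G] (hG : LocallyFiniteGroup G)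
    (Q : Subgroup G) (hQ : IsComponent Q)
    (R : Subgroup G) [R.Normal] (hRls : LocallySolvable R)
    (hRmax : ∀ N : Subgroup G, N.Normal → LocallySolvable N → N ≤ R) :
    Nonempty
      ((Subgroup.normalizer (Q : Set G) ⧸ (Subgroup.centralizer (Q : Set G)).subgroupOf (Subgroup.normalizer (Q : Set G))) ≃*
        ((Subgroup.normalizer ((Q.map (QuotientGroup.mk' R) : Subgroup (G ⧸ R)) : Set (G ⧸ R))) ⧸
          (Subgroup.centralizer ((Q.map (QuotientGroup.mk' R) : Subgroup (G ⧸ R)) :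
              Set (G ⧸ R))).subgroupOf (Subgroup.normalizer ((Q.map (QuotientGroup.mk' R) : Subgroup (G ⧸ R)) : Set (G ⧸ R))))) := by
  classical
  have hsn := isSubnormal_relSN hQ.1
  have hperf : _root_.commutator ↥Q = ⊤ := hQ.2.1
  have hsimp : IsSimpleGroup (↥Q ⧸ center ↥Q) := hQ.2.2
  have hmemN : ∀ x : ↥(Subgroup.normalizer (Q : Set G)),
      (QuotientGroup.mk' R) ↑x ∈ (Subgroup.normalizer ((Q.map (QuotientGroup.mk' R) : Subgroup (G ⧸ R)) : Set (G ⧸ R))) :=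
    fun x => map_normalizer_mem _ Q x.2
  let f₁ : ↥(Subgroup.normalizer (Q : Set G)) →* ↥(Subgroup.normalizer ((Q.map (QuotientGroup.mk' R) : Subgroup (G ⧸ R)) : Set (G ⧸ R))) :=
    ((QuotientGroup.mk' R).comp (Subgroup.normalizer (Q : Set G)).subtype).codRestrict _ hmemN
  let C' := (Subgroup.centralizer ((Q.map (QuotientGroup.mk' R) : Subgroup (G ⧸ R)) :
      Set (G ⧸ R))).subgroupOf (Subgroup.normalizer ((Q.map (QuotientGroup.mk' R) : Subgroup (G ⧸ R)) : Set (G ⧸ R)))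
  let f := (QuotientGroup.mk' C').comp f₁
  have hfsurj : Surjective f := by
    intro z
    obtain ⟨xb, rfl⟩ := QuotientGroup.mk'_surjective C' z
    obtain ⟨y, hy⟩ := QuotientGroup.mk'_surjective R (xb : G ⧸ R)
    have hyn : y ∈ (Subgroup.normalizer (Q : Set G)) :=
      key_normalizer hG Q R hRls hsn hperf hsimp y (by rw [hy]; exact xb.2)
    refine ⟨⟨y, hyn⟩, ?_⟩
    show (QuotientGroup.mk' C') (f₁ ⟨y, hyn⟩) = (QuotientGroup.mk' C') xb
    congr 1
    exact Subtype.ext hy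
  have hker : ((Subgroup.centralizer (Q : Set G)).subgroupOf (Subgroup.normalizer (Q : Set G))) = f.ker := by
    ext g
    rw [MonoidHom.mem_ker]
    have hfg : f g = (QuotientGroup.mk' C') (f₁ g) := rfl
    rw [hfg, ← MonoidHom.mem_ker, QuotientGroup.ker_mk']
    rw [Subgroup.mem_subgroupOf, Subgroup.mem_subgroupOf]
    have hcoe : ((f₁ g : ↥(Subgroup.normalizer ((Q.map (QuotientGroup.mk' R) : Subgroup (G ⧸ R)) : Set (G ⧸ R)))) : G ⧸ R) =
        (QuotientGroup.mk' R) ↑g := rfl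
    rw [hcoe]
    constructor
    · intro hgC
      rw [Subgroup.mem_centralizer_iff] at hgC ⊢
      rintro _ ⟨q, hq, rfl⟩
      show (QuotientGroup.mk' R) q * (QuotientGroup.mk' R) ↑g =
        (QuotientGroup.mk' R) ↑g * (QuotientGroup.mk' R) q
      rw [← map_mul, ← map_mul, hgC q hq]
    · intro h
      exact ker_side hG Q R hRls hperf hsimp ↑g g.2 h
  exact ⟨(QuotientGroup.quotientMulEquivOfEq hker).trans
    (QuotientGroup.quotientKerEquivOfSurjective f hfsurj)⟩
end

section
/- Let G be a locally finite group of finite c-dimension k. Then G contains a finite subgroup H whose c-dimension is also equal to k. -/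
/-- Any centralizer chain in a subgroup lifts to a centralizer chain of the same length
in the ambient group. -/
lemma aux_chain_lift {G : Type*} [Group G] (H : Subgroup G) {n : ℕ}
    (c : Fin (n + 1) → Subgroup H) (hc : IsCentralizerChain c) :
    ∃ C : Fin (n + 1) → Subgroup G, IsCentralizerChain C := by
  obtain ⟨hmono, hcent⟩ := hc
  choose S hS using hcent
  set C : Fin (n + 1) → Subgroup G := fun m =>
    Subgroup.centralizer (⋃ j, ⋃ (_ : m ≤ j), ((↑) '' S j : Set G)) with hC
  have key : ∀ (m : Fin (n + 1)) (x : H), (x : G) ∈ C m ↔ x ∈ c m := by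
    intro m x
    rw [hC]
    simp only [Subgroup.mem_centralizer_iff]
    constructor
    · intro h
      rw [hS m, Subgroup.mem_centralizer_iff]
      intro g hg
      have hmem : (g : G) ∈ ⋃ j, ⋃ (_ : m ≤ j), ((↑) '' S j : Set G) := by
        refine Set.mem_iUnion.mpr ⟨m, Set.mem_iUnion.mpr ⟨le_refl m, ⟨g, hg, rfl⟩⟩⟩
      have := h (g : G) hmem
      exact Subtype.ext (by exact_mod_cast this)
    · intro h g hg
      simp only [Set.mem_iUnion, Set.mem_image] at hg
      obtain ⟨j, hmj, s, hs, rfl⟩ := hg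
      have hx : x ∈ c j := hmono.monotone hmj h
      rw [hS j, Subgroup.mem_centralizer_iff] at hx
      exact_mod_cast hx s hs
  have hCmono : Monotone C := by
    intro a b hab
    apply Subgroup.centralizer_le
    refine Set.iUnion_subset fun j => Set.iUnion_subset fun hbj => ?_
    intro y hy
    exact Set.mem_iUnion.mpr ⟨j, Set.mem_iUnion.mpr ⟨hab.trans hbj, hy⟩⟩
  refine ⟨C, ⟨fun a b hab => lt_of_le_of_ne (hCmono hab.le) fun heq => ?_, fun m => ⟨_, rfl⟩⟩⟩
  have : c a = c b := by
    ext y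
    rw [← key a y, ← key b y, heq]
  exact (hmono hab).ne this

/-- The c-dimension of a subgroup is at most that of the ambient group. -/
lemma aux_cdim_le {G : Type*} [Group G] (H : Subgroup G) : cdim H ≤ cdim G := by
  refine iSup₂_le fun n hn => ?_
  obtain ⟨c, hc⟩ := hn
  obtain ⟨C, hC⟩ := aux_chain_lift H c hc
  exact le_iSup₂ (f := fun (n : ℕ)
    (_ : ∃ c : Fin (n + 1) → Subgroup G, IsCentralizerChain c) => (n : ℕ∞)) n ⟨C, hC⟩

/-- A group of c-dimension `k` has a centralizer chain of length exactly `k`. -/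
lemma aux_exists_chain {G : Type*} [Group G] {k : ℕ} (hk : cdim G = (k : ℕ∞)) :
    ∃ c : Fin (k + 1) → Subgroup G, IsCentralizerChain c := by
  by_contra h
  have h0 : ∃ c : Fin (0 + 1) → Subgroup G, IsCentralizerChain c :=
    ⟨fun _ => Subgroup.centralizer ∅,
      fun i j hij => absurd (Fin.ext (by have := i.isLt; have := j.isLt; omega)) hij.ne,
      fun _ => ⟨∅, rfl⟩⟩
  have hk0 : k ≠ 0 := by rintro rfl; exact h h0
  have hle : cdim G ≤ ((k - 1 : ℕ) : ℕ∞) := by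
    refine iSup₂_le fun n hn => ?_
    have hnk : (n : ℕ∞) ≤ (k : ℕ∞) := by
      rw [← hk]
      exact le_iSup₂ (f := fun (n : ℕ)
        (_ : ∃ c : Fin (n + 1) → Subgroup G, IsCentralizerChain c) => (n : ℕ∞)) n hn
    have hnk' : n ≤ k := by exact_mod_cast hnk
    have hne : n ≠ k := by rintro rfl; exact h hn
    exact_mod_cast (by omega : n ≤ k - 1)
  rw [hk] at hle
  have := (Nat.cast_le (α := ℕ∞)).mp hle
  omega

theorem exists_finite_subgroup_same_cdim
    (G : Type*) [Group G] (hG : LocallyFiniteGroup G) (k : ℕ) (hk : cdim G = (k : ℕ∞)) :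
    ∃ H : Subgroup G, Finite H ∧ cdim H = (k : ℕ∞) := by
  classical
  obtain ⟨c, hmono, hcent⟩ := aux_exists_chain hk
  choose S hS using hcent
  -- pick witnesses of strictness
  have hx : ∀ i : Fin k, ∃ x : G, x ∈ c i.succ ∧ x ∉ c i.castSucc := fun i =>
    SetLike.exists_of_lt (hmono (Fin.castSucc_lt_succ : i.castSucc < i.succ))
  choose x hx1 hx2 using hx
  -- pick non-commuting elements
  have ht : ∀ i : Fin k, ∃ t : G, t ∈ S i.castSucc ∧ ¬ t * x i = x i * t := by
    intro i
    have h2 := hx2 i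
    rw [hS, Subgroup.mem_centralizer_iff] at h2
    push_neg at h2
    exact h2
  choose t ht1 ht2 using ht
  -- the finite subgroup
  set Fs : Finset G := Finset.univ.image x ∪ Finset.univ.image t with hFs
  set H : Subgroup G := Subgroup.closure (Fs : Set G) with hH
  have hfin : Finite H := (hG Fs).to_subtype
  have hxH : ∀ i, x i ∈ H := fun i => Subgroup.subset_closure (by
    simp only [hFs, Finset.coe_union, Finset.coe_image, Finset.coe_univ, Set.image_univ,
      Set.mem_union, Set.mem_range]
    exact Or.inl ⟨i, rfl⟩)
  have htH : ∀ i, t i ∈ H := fun i => Subgroup.subset_closure (by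
    simp only [hFs, Finset.coe_union, Finset.coe_image, Finset.coe_univ, Set.image_univ,
      Set.mem_union, Set.mem_range]
    exact Or.inr ⟨i, rfl⟩)
  set xh : Fin k → H := fun i => ⟨x i, hxH i⟩ with hxh
  set th : Fin k → H := fun i => ⟨t i, htH i⟩ with hth
  -- the centralizer chain in H
  set d : Fin (k + 1) → Subgroup H := fun m =>
    Subgroup.centralizer (th '' {j | m ≤ j.castSucc}) with hd
  have hdmono : Monotone d := by
    intro a b hab
    exact Subgroup.centralizer_le (Set.image_mono fun j hj => hab.trans hj)
  have hdstrict : StrictMono d := by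
    intro a b hab
    have hak : (a : ℕ) < k := by
      have hb := b.isLt
      have := (Fin.lt_iff_val_lt_val.mp hab)
      omega
    set i : Fin k := ⟨a, hak⟩ with hi
    have h1 : xh i ∈ d b := by
      rw [hd, Subgroup.mem_centralizer_iff]
      rintro g ⟨j, hj, rfl⟩
      have hij : i.succ ≤ j.castSucc := by
        simp only [Set.mem_setOf_eq] at hj
        have := Fin.le_iff_val_le_val.mp hj
        have := Fin.lt_iff_val_lt_val.mp hab
        rw [Fin.le_iff_val_le_val]
        simp only [Fin.val_succ, Fin.coe_castSucc, hi] at *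
        omega
      have hxc : x i ∈ c j.castSucc := hmono.monotone hij (hx1 i)
      rw [hS, Subgroup.mem_centralizer_iff] at hxc
      exact Subtype.ext (hxc (t j) (ht1 j))
    have h2 : xh i ∉ d a := by
      intro hmem
      rw [hd, Subgroup.mem_centralizer_iff] at hmem
      have hmemi : th i ∈ th '' {j | a ≤ j.castSucc} :=
        ⟨i, by simp only [Set.mem_setOf_eq]; exact Fin.le_iff_val_le_val.mpr (by simp [hi]), rfl⟩
      have := hmem (th i) hmemi
      have h' := Subtype.ext_iff.mp this
      push_cast at h'
      exact ht2 i h'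
    exact lt_of_le_of_ne (hdmono hab.le) fun e => h2 (e.symm ▸ h1)
  have hchain : IsCentralizerChain d := ⟨hdstrict, fun m => ⟨_, rfl⟩⟩
  have hge : (k : ℕ∞) ≤ cdim H :=
    le_iSup₂ (f := fun (n : ℕ)
      (_ : ∃ c : Fin (n + 1) → Subgroup ↥H, IsCentralizerChain c) => (n : ℕ∞)) k ⟨d, hchain⟩
  have hle : cdim H ≤ (k : ℕ∞) := hk ▸ aux_cdim_le H
  exact ⟨H, hfin, le_antisymm hle hge⟩
end

section
/- Let p be a prime and let E be an elementary abelian p-group of order p^n acting faithfully on a finite nilpotent p'-group Q (i.e., a finite nilpotent group of order coprime to p). Then there exists a strictly descending chain of subgroups E = E₀ > E₁ > E₂ > … > E_n = 1 such that the fixed-point subgroups form a strictly ascending chain C_Q(E₀) < C_Q(E₁) < … < C_Q(E_n). -/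
namespace EACH

section Compl

variable {E : Type*} [CommGroup E] [Finite E]

/-- card of sup of disjoint subgroups of a commutative group -/
lemma card_sup_of_inf_bot (X W : Subgroup E) (h : X ⊓ W = ⊥) :
    Nat.card ↥(X ⊔ W) = Nat.card X * Nat.card W := by
  let f : ↥X × ↥W →* E := MonoidHom.mk' (fun z => (z.1 : E) * z.2)
    (by intro a b; simp [mul_mul_mul_comm])
  have hinj : Function.Injective f := by
    rw [← MonoidHom.ker_eq_bot_iff]
    ext ⟨a, b⟩
    simp only [MonoidHom.mem_ker, Subgroup.mem_bot, Prod.mk_eq_one]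
    constructor
    · intro hab
      have hab' : (a : E) * b = 1 := hab
      have h1 : (a : E) = (b : E)⁻¹ := eq_inv_of_mul_eq_one_left hab'
      have h2 : (a : E) ∈ X ⊓ W :=
        Subgroup.mem_inf.mpr ⟨a.2, by rw [h1]; exact inv_mem b.2⟩
      rw [h, Subgroup.mem_bot] at h2
      have hb : (b : E) = 1 := by rw [h2, one_mul] at hab'; exact hab'
      exact ⟨Subtype.ext h2, Subtype.ext hb⟩
    · rintro ⟨rfl, rfl⟩
      show (1 : E) * 1 = 1
      simp
  have hrange : Set.range ⇑f = ((X ⊔ W : Subgroup E) : Set E) := by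
    ext x
    simp only [Set.mem_range, SetLike.mem_coe, Subgroup.mem_sup]
    constructor
    · rintro ⟨⟨a, b⟩, rfl⟩; exact ⟨a, a.2, b, b.2, rfl⟩
    · rintro ⟨y, hy, z, hz, rfl⟩; exact ⟨(⟨⟨y, hy⟩, ⟨z, hz⟩⟩ : ↥X × ↥W), rfl⟩
  have hcr := Nat.card_range_of_injective hinj
  rw [hrange] at hcr
  rw [show Nat.card ↥(X ⊔ W) = Nat.card ((X ⊔ W : Subgroup E) : Set E) from rfl, hcr,
    Nat.card_prod]

variable {p : ℕ} (hp : p.Prime) (hE : ∀ x : E, x ^ p = 1)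

private lemma exists_rel_compl_aux {p : ℕ} [Fact p.Prime]
    [Module (ZMod p) (Additive E)] (X V : Subgroup E) (hXV : X ≤ V) :
    ∃ W : Subgroup E, W ≤ V ∧ X ⊓ W = ⊥ ∧ X ⊔ W = V := by
  let σ : Subgroup E ≃o Submodule (ZMod p) (Additive E) :=
    (Subgroup.toAddSubgroup (G := E)).trans (AddSubgroup.toZModSubmodule p)
  obtain ⟨T, hT⟩ := Submodule.exists_isCompl (σ X)
  refine ⟨σ.symm (T ⊓ σ V), ?_, ?_, ?_⟩
  · have h1 : σ.symm (T ⊓ σ V) ≤ σ.symm (σ V) := σ.symm.monotone inf_le_right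
    rwa [OrderIso.symm_apply_apply] at h1
  · have h1 : X ⊓ σ.symm (T ⊓ σ V) = σ.symm (σ X) ⊓ σ.symm (T ⊓ σ V) := by
      rw [OrderIso.symm_apply_apply]
    rw [h1, ← σ.symm.map_inf, ← inf_assoc, hT.inf_eq_bot, bot_inf_eq, σ.symm.map_bot]
  · have h1 : X ⊔ σ.symm (T ⊓ σ V) = σ.symm (σ X) ⊔ σ.symm (T ⊓ σ V) := by
      rw [OrderIso.symm_apply_apply]
    rw [h1, ← σ.symm.map_sup, ← sup_inf_assoc_of_le _ (show σ X ≤ σ V from σ.monotone hXV),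
      hT.sup_eq_top, top_inf_eq, OrderIso.symm_apply_apply]

include hp hE in
/-- relative complements exist in an elementary abelian group -/
lemma exists_rel_compl (X V : Subgroup E) (hXV : X ≤ V) :
    ∃ W : Subgroup E, W ≤ V ∧ X ⊓ W = ⊥ ∧ X ⊔ W = V := by
  haveI : Fact p.Prime := ⟨hp⟩
  haveI : NeZero p := ⟨hp.ne_zero⟩
  letI : Module (ZMod p) (Additive E) := AddCommGroup.zmodModule (n := p)
    (fun x => by simpa using congrArg Additive.ofMul (hE (Additive.toMul x)))
  exact exists_rel_compl_aux (p := p) X V hXV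

end Compl

section Trace

variable {E M : Type*} [CommGroup E] [Finite E] [CommGroup M] [MulDistribMulAction E M]

/-- the finset of elements of a subgroup -/
noncomputable def sgFinset (F : Subgroup E) : Finset E := (Set.toFinite (F : Set E)).toFinset

lemma mem_sgFinset {F : Subgroup E} {x : E} : x ∈ sgFinset F ↔ x ∈ F :=
  Set.Finite.mem_toFinset _

lemma sgFinset_card (F : Subgroup E) : (sgFinset F).card = Nat.card F := by
  rw [show Nat.card ↥F = Nat.card ((F : Set E) : Type _) from rfl, Nat.card_coe_set_eq,
    Set.ncard_eq_toFinset_card (F : Set E) (Set.toFinite _)]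
  rfl

/-- fixed points of a subgroup, as a subgroup -/
def fixSub (V : Subgroup E) (M : Type*) [CommGroup M] [MulDistribMulAction E M] : Subgroup M where
  carrier := {m | ∀ g ∈ V, g • m = m}
  one_mem' := fun g _ => smul_one g
  mul_mem' := fun ha hb g hg => by rw [smul_mul', ha g hg, hb g hg]
  inv_mem' := fun ha g hg => by rw [smul_inv', ha g hg]

lemma mem_fixSub {V : Subgroup E} {m : M} : m ∈ fixSub V M ↔ ∀ g ∈ V, g • m = m := Iff.rfl

/-- the "trace" (norm) of an element under a subgroup action -/
noncomputable def trc (F : Subgroup E) (m : M) : M := ∏ f ∈ sgFinset F, f • m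

lemma trc_mem {F : Subgroup E} {D : Subgroup M} (hD : ∀ g ∈ F, ∀ x ∈ D, g • x ∈ D)
    {m : M} (hm : m ∈ D) : trc F m ∈ D :=
  Subgroup.prod_mem D fun f hf => hD f (mem_sgFinset.mp hf) m hm

lemma smul_trc {F : Subgroup E} {f : E} (hf : f ∈ F) (m : M) : f • trc F m = trc F m := by
  have h1 : f • trc F m = ∏ g ∈ sgFinset F, (f * g) • m := by
    rw [trc,
      show f • (∏ g ∈ sgFinset F, g • m) = ∏ g ∈ sgFinset F, f • (g • m) from
        map_prod (MulDistribMulAction.toMonoidHom M f) _ _]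
    exact Finset.prod_congr rfl fun g _ => (mul_smul f g m).symm
  rw [h1, trc]
  refine Finset.prod_nbij' (fun g => f * g) (fun g => f⁻¹ * g) ?_ ?_ ?_ ?_ ?_
  · exact fun a ha => mem_sgFinset.mpr (mul_mem hf (mem_sgFinset.mp ha))
  · exact fun a ha => mem_sgFinset.mpr (mul_mem (inv_mem hf) (mem_sgFinset.mp ha))
  · intro a _; group
  · intro a _; group
  · intro a _; rfl

lemma smul_trc_of_fix {b : E} {m : M} (hb : b • m = m) (F : Subgroup E) :
    b • trc F m = trc F m := by
  have h1 : b • trc F m = ∏ g ∈ sgFinset F, (b * g) • m := by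
    rw [trc,
      show b • (∏ g ∈ sgFinset F, g • m) = ∏ g ∈ sgFinset F, b • (g • m) from
        map_prod (MulDistribMulAction.toMonoidHom M b) _ _]
    exact Finset.prod_congr rfl fun g _ => (mul_smul b g m).symm
  rw [h1, trc]
  refine Finset.prod_congr rfl fun g _ => ?_
  rw [mul_comm, mul_smul, hb]

end Trace

section Lines

variable {E : Type*} [CommGroup E] [Finite E] {p : ℕ} (hp : p.Prime) (hE : ∀ x : E, x ^ p = 1)

open scoped Classical in
/-- the set of subgroups of order `p` of `W` -/
noncomputable def lines (W : Subgroup E) : Finset (Subgroup E) :=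
  ((sgFinset W).erase 1).image fun w => Subgroup.zpowers w

include hp hE in
lemma zpowers_eq_zpowers {w f : E} (hw : w ≠ 1) (hf : f ∈ Subgroup.zpowers w) (hf1 : f ≠ 1) :
    Subgroup.zpowers f = Subgroup.zpowers w := by
  haveI : Fact p.Prime := ⟨hp⟩
  have h1 : orderOf w = p := orderOf_eq_prime (hE w) hw
  have h2 : orderOf f = p := orderOf_eq_prime (hE f) hf1
  refine Subgroup.eq_of_le_of_card_ge (Subgroup.zpowers_le.mpr hf) ?_
  rw [Nat.card_zpowers, Nat.card_zpowers, h1, h2]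

lemma mem_lines {W Z : Subgroup E} :
    Z ∈ lines W ↔ ∃ w, w ∈ W ∧ w ≠ 1 ∧ Z = Subgroup.zpowers w := by
  simp only [lines, Finset.mem_image, Finset.mem_erase, mem_sgFinset]
  constructor
  · rintro ⟨w, ⟨hw1, hwW⟩, rfl⟩; exact ⟨w, hwW, hw1, rfl⟩
  · rintro ⟨w, hwW, hw1, rfl⟩; exact ⟨w, ⟨hw1, hwW⟩, rfl⟩

lemma lines_le {W Z : Subgroup E} (h : Z ∈ lines W) : Z ≤ W := by
  obtain ⟨w, hwW, _, rfl⟩ := mem_lines.mp h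
  exact Subgroup.zpowers_le.mpr hwW

include hp hE in
lemma card_of_mem_lines {W Z : Subgroup E} (h : Z ∈ lines W) : Nat.card Z = p := by
  haveI : Fact p.Prime := ⟨hp⟩
  obtain ⟨w, _, hw1, rfl⟩ := mem_lines.mp h
  rw [Nat.card_zpowers, orderOf_eq_prime (hE w) hw1]

include hp hE in
lemma zpowers_eq_of_mem_lines {W Z : Subgroup E} (h : Z ∈ lines W) {f : E} (hf : f ∈ Z)
    (hf1 : f ≠ 1) : Subgroup.zpowers f = Z := by
  obtain ⟨w, _, hw1, rfl⟩ := mem_lines.mp h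
  exact zpowers_eq_zpowers hp hE hw1 hf hf1

include hp hE in
lemma card_lines {W : Subgroup E} (hW : Nat.card W = p ^ 2) : (lines W).card = p + 1 := by
  classical
  have hfib : ∀ Z ∈ lines W,
      ((sgFinset W).erase 1).filter (fun w => Subgroup.zpowers w = Z) = (sgFinset Z).erase 1 := by
    intro Z hZ
    ext x
    simp only [Finset.mem_filter, Finset.mem_erase, mem_sgFinset]
    constructor
    · rintro ⟨⟨hx1, _⟩, rfl⟩
      exact ⟨hx1, Subgroup.mem_zpowers x⟩
    · rintro ⟨hx1, hxZ⟩
      exact ⟨⟨hx1, lines_le hZ hxZ⟩, zpowers_eq_of_mem_lines hp hE hZ hxZ hx1⟩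
  have hcount := Finset.card_eq_sum_card_fiberwise
    (s := (sgFinset W).erase 1) (t := lines W) (f := fun w => Subgroup.zpowers w)
    (fun x hx => by
      rw [Finset.mem_coe, mem_lines]
      obtain ⟨hx1, hxW⟩ := Finset.mem_erase.mp (Finset.mem_coe.mp hx)
      exact ⟨x, mem_sgFinset.mp hxW, hx1, rfl⟩)
  rw [Finset.card_erase_of_mem (mem_sgFinset.mpr (one_mem W)), sgFinset_card, hW] at hcount
  have hsum : ∀ Z ∈ lines W,
      (((sgFinset W).erase 1).filter (fun w => Subgroup.zpowers w = Z)).card = p - 1 := by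
    intro Z hZ
    rw [hfib Z hZ, Finset.card_erase_of_mem (mem_sgFinset.mpr (one_mem Z)), sgFinset_card,
      card_of_mem_lines hp hE hZ]
  rw [Finset.sum_congr rfl hsum, Finset.sum_const, smul_eq_mul] at hcount
  obtain ⟨q, rfl⟩ : ∃ q, p = q + 1 := ⟨p - 1, (Nat.succ_pred_eq_of_pos hp.pos).symm⟩
  have hq : 1 ≤ q := by
    have := hp.two_le; omega
  simp only [Nat.add_sub_cancel] at hcount
  have h2 : (q + 1) ^ 2 - 1 = (q + 2) * q := by
    have : (q + 1) ^ 2 = (q + 2) * q + 1 := by ring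
    omega
  have hcount' : (lines W).card * q = (q + 2) * q := by rw [← hcount, h2]
  have := Nat.eq_of_mul_eq_mul_right (by omega : 0 < q) hcount'
  omega

end Lines

section AbelianMain

variable {E M : Type*} [CommGroup E] [Finite E] [CommGroup M] [Finite M]
  [MulDistribMulAction E M]
variable {p : ℕ} (hp : p.Prime) (hE : ∀ x : E, x ^ p = 1)

include hp hE in
lemma prod_trc_lines {W : Subgroup E} (hW : Nat.card W = p ^ 2) (m : M) :
    ∏ Z ∈ lines W, trc Z m = m ^ p * trc W m := by
  classical
  have hsplit : ∀ Z : Subgroup E, trc Z m = m * ∏ f ∈ (sgFinset Z).erase 1, f • m := by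
    intro Z
    rw [trc, ← Finset.mul_prod_erase _ _ (mem_sgFinset.mpr (one_mem Z)), one_smul]
  have hdisj : ((lines W : Set (Subgroup E))).PairwiseDisjoint
      (fun Z : Subgroup E => (sgFinset Z).erase 1) := by
    intro Z₁ h1 Z₂ h2 hne
    rw [Function.onFun, Finset.disjoint_left]
    intro x hx1 hx2
    obtain ⟨hx1', hxZ1⟩ := Finset.mem_erase.mp hx1
    obtain ⟨_, hxZ2⟩ := Finset.mem_erase.mp hx2
    exact hne (((zpowers_eq_of_mem_lines hp hE h1 (mem_sgFinset.mp hxZ1) hx1').symm).trans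
      (zpowers_eq_of_mem_lines hp hE h2 (mem_sgFinset.mp hxZ2) hx1'))
  have hbi : (sgFinset W).erase 1 = (lines W).biUnion (fun Z => (sgFinset Z).erase 1) := by
    ext x
    simp only [Finset.mem_biUnion, Finset.mem_erase, mem_sgFinset]
    constructor
    · rintro ⟨hx1, hxW⟩
      exact ⟨Subgroup.zpowers x, mem_lines.mpr ⟨x, hxW, hx1, rfl⟩, hx1, Subgroup.mem_zpowers x⟩
    · rintro ⟨Z, hZ, hx1, hxZ⟩
      exact ⟨hx1, lines_le hZ hxZ⟩
  calc ∏ Z ∈ lines W, trc Z m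
      = ∏ Z ∈ lines W, (m * ∏ f ∈ (sgFinset Z).erase 1, f • m) :=
        Finset.prod_congr rfl (fun Z _ => hsplit Z)
    _ = m ^ (lines W).card * ∏ Z ∈ lines W, ∏ f ∈ (sgFinset Z).erase 1, f • m := by
        rw [Finset.prod_mul_distrib, Finset.prod_const]
    _ = m ^ (p + 1) * ∏ f ∈ (sgFinset W).erase 1, f • m := by
        rw [card_lines hp hE hW, hbi, Finset.prod_biUnion hdisj]
    _ = m ^ p * trc W m := by rw [hsplit W, pow_succ, mul_assoc]

variable (hM : ¬ p ∣ Nat.card M)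

include hp hM in
lemma mem_of_pow_p_mem {S : Subgroup M} {m : M} (hm : m ^ p ∈ S) : m ∈ S := by
  have hco : Nat.Coprime p (orderOf m) :=
    (hp.coprime_iff_not_dvd).mpr (fun hd => hM (hd.trans (orderOf_dvd_natCard m)))
  have htot := Nat.ModEq.pow_totient hco
  have hpos : 0 < (orderOf m).totient := Nat.totient_pos.mpr (orderOf_pos m)
  have h1 : m ^ (p ^ (orderOf m).totient) = m ^ 1 := pow_eq_pow_iff_modEq.mpr htot
  have h2 : m = (m ^ p) ^ (p ^ ((orderOf m).totient - 1)) := by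
    rw [← pow_mul, ← pow_succ', Nat.sub_add_cancel hpos, h1, pow_one]
  rw [h2]
  exact pow_mem hm _

include hp hE hM in
lemma A_main : ∀ (k : ℕ) (V : Subgroup E) (D : Subgroup M), Nat.card V = p ^ k →
    (∀ g ∈ V, ∀ x ∈ D, g • x ∈ D) →
    (∀ B : Subgroup E, B ≤ V → Nat.card B = p ^ (k - 1) →
      ∀ m ∈ D, (∀ b ∈ B, b • m = m) → ∀ g ∈ V, g • m = m) →
    ∀ m ∈ D, ∀ g ∈ V, g • m = m := by
  intro k
  induction k with
  | zero =>
    intro V D hcard _ _ m _ g hg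
    have hV : V = ⊥ := Subgroup.card_eq_one.mp (by simpa using hcard)
    rw [hV, Subgroup.mem_bot] at hg
    rw [hg, one_smul]
  | succ k ih =>
    intro V D hcard hinv hhyp
    -- find a hyperplane U of V
    have hVne : V ≠ ⊥ := by
      intro h
      rw [h] at hcard
      simp only [Subgroup.card_bot] at hcard
      exact absurd hcard.symm (Nat.ne_of_gt (Nat.one_lt_pow (Nat.succ_ne_zero k) hp.one_lt))
    obtain ⟨⟨g₀, hg₀V⟩, hg₀⟩ := Subgroup.ne_bot_iff_exists_ne_one.mp hVne
    have hg₀1 : g₀ ≠ 1 := by simpa [Subtype.ext_iff] using hg₀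
    haveI : Fact p.Prime := ⟨hp⟩
    have hXcard : Nat.card (Subgroup.zpowers g₀) = p := by
      rw [Nat.card_zpowers, orderOf_eq_prime (hE g₀) hg₀1]
    obtain ⟨U, hUV, hXUinf, hXUsup⟩ :=
      exists_rel_compl hp hE (Subgroup.zpowers g₀) V (Subgroup.zpowers_le.mpr hg₀V)
    have hUcard : Nat.card U = p ^ k := by
      have h1 := card_sup_of_inf_bot (Subgroup.zpowers g₀) U hXUinf
      rw [hXUsup, hcard, hXcard, pow_succ'] at h1
      exact (Nat.eq_of_mul_eq_mul_left hp.pos h1.symm)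
    -- the key claim: every B'-fixed point of D (B' a hyperplane of U) is V-fixed
    have hkey : ∀ B' : Subgroup E, B' ≤ U → Nat.card B' = p ^ (k - 1) →
        ∀ m ∈ D, (∀ b ∈ B', b • m = m) → ∀ g ∈ V, g • m = m := by
      intro B' hB'U hB'card m hmD hmfix
      rcases k with _ | k'
      · -- U = ⊥, but we must still conclude V-fixedness... use hhyp with B' = B (card p^0 = 1)
        exact hhyp B' (hB'U.trans hUV) hB'card m hmD hmfix
      · -- main case : complement W of B' in V has order p²
        obtain ⟨W, hWV, hBWinf, hBWsup⟩ :=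
          exists_rel_compl hp hE B' V (hB'U.trans hUV)
        have hWcard : Nat.card W = p ^ 2 := by
          have h1 := card_sup_of_inf_bot B' W hBWinf
          rw [hBWsup, hcard, hB'card] at h1
          simp only [Nat.add_sub_cancel] at h1
          have h2 : p ^ (k' + 1 + 1) = p ^ k' * p ^ 2 := by ring
          rw [h2] at h1
          exact (Nat.eq_of_mul_eq_mul_left (pow_pos hp.pos _) h1.symm)
        have hcardB : ∀ Z ∈ lines W, Nat.card ↥(B' ⊔ Z) = p ^ (k' + 1 + 1 - 1) := by
          intro Z hZ
          have hZinf : B' ⊓ Z = ⊥ := by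
            rw [← le_bot_iff, ← hBWinf]
            exact inf_le_inf_left _ (lines_le hZ)
          rw [card_sup_of_inf_bot B' Z hZinf, card_of_mem_lines hp hE hZ, hB'card]
          simp only [Nat.add_sub_cancel]
          ring
        have hfixtrc : ∀ Z ∈ lines W, trc Z m ∈ fixSub V M ⊓ D := by
          intro Z hZ
          have hZV : Z ≤ V := (lines_le hZ).trans hWV
          have htD : trc Z m ∈ D := trc_mem (fun g hg x hx => hinv g (hZV hg) x hx) hmD
          have htfix : ∀ b ∈ B' ⊔ Z, b • trc Z m = trc Z m := by
            have hst : B' ⊔ Z ≤ MulAction.stabilizer E (trc Z m) := by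
              refine sup_le ?_ ?_
              · intro b hb
                exact MulAction.mem_stabilizer_iff.mpr (smul_trc_of_fix (hmfix b hb) Z)
              · intro f hf
                exact MulAction.mem_stabilizer_iff.mpr (smul_trc hf m)
            exact fun b hb => hst hb
          refine Subgroup.mem_inf.mpr ⟨?_, htD⟩
          intro g hg
          exact hhyp (B' ⊔ Z) (sup_le (hB'U.trans hUV) hZV) (hcardB Z hZ)
            (trc Z m) htD htfix g hg
        have hWne : ∃ w, w ∈ W ∧ w ≠ 1 := by
          have : W ≠ ⊥ := by
            intro h
            rw [h] at hWcard
            simp only [Subgroup.card_bot] at hWcard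
            exact absurd hWcard.symm (Nat.ne_of_gt (Nat.one_lt_pow two_ne_zero hp.one_lt))
          obtain ⟨⟨w, hwW⟩, hw⟩ := Subgroup.ne_bot_iff_exists_ne_one.mp this
          exact ⟨w, hwW, by simpa [Subtype.ext_iff] using hw⟩
        have hWtrc : trc W m ∈ fixSub V M ⊓ D := by
          obtain ⟨w, hwW, hw1⟩ := hWne
          have hZ₀ : Subgroup.zpowers w ∈ lines W := mem_lines.mpr ⟨w, hwW, hw1, rfl⟩
          have htD : trc W m ∈ D := trc_mem (fun g hg x hx => hinv g (hWV hg) x hx) hmD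
          have htfix : ∀ b ∈ B' ⊔ Subgroup.zpowers w, b • trc W m = trc W m := by
            have hst : B' ⊔ Subgroup.zpowers w ≤ MulAction.stabilizer E (trc W m) := by
              refine sup_le ?_ ?_
              · intro b hb
                exact MulAction.mem_stabilizer_iff.mpr (smul_trc_of_fix (hmfix b hb) W)
              · intro f hf
                exact MulAction.mem_stabilizer_iff.mpr
                  (smul_trc (Subgroup.zpowers_le.mpr hwW hf) m)
            exact fun b hb => hst hb
          refine Subgroup.mem_inf.mpr ⟨?_, htD⟩
          intro g hg
          exact hhyp (B' ⊔ Subgroup.zpowers w)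
            (sup_le (hB'U.trans hUV) ((lines_le hZ₀).trans hWV)) (hcardB _ hZ₀)
            (trc W m) htD htfix g hg
        have hmp : m ^ p ∈ fixSub V M ⊓ D := by
          have hid := prod_trc_lines hp hE hWcard m
          have h3 : m ^ p = (∏ Z ∈ lines W, trc Z m) * (trc W m)⁻¹ := by
            rw [hid]; group
          rw [h3]
          exact mul_mem (Subgroup.prod_mem _ (fun Z hZ => hfixtrc Z hZ)) (inv_mem hWtrc)
        have hmfixV : m ∈ fixSub V M ⊓ D := mem_of_pow_p_mem hp hM hmp
        exact fun g hg => (Subgroup.mem_inf.mp hmfixV).1 g hg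
    -- apply the induction hypothesis to U
    have hUfix := ih U D hUcard (fun g hg x hx => hinv g (hUV hg) x hx)
      (fun B' hB'U hB'c m hmD hmfix g hg => hkey B' hB'U hB'c m hmD hmfix g (hUV hg))
    intro m hmD g hgV
    exact hhyp U hUV (by simpa using hUcard) m hmD (fun b hb => hUfix m hmD b hb) g hgV

include hp hE hM in
lemma A_exists (k : ℕ) (V : Subgroup E) (hcard : Nat.card V = p ^ k)
    (hnt : ∃ g ∈ V, ∃ m : M, g • m ≠ m) :
    ∃ B : Subgroup E, B ≤ V ∧ Nat.card B = p ^ (k - 1) ∧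
      ∃ m : M, (∀ b ∈ B, b • m = m) ∧ ∃ g ∈ V, g • m ≠ m := by
  by_contra hcon
  push_neg at hcon
  obtain ⟨g, hg, m, hm⟩ := hnt
  refine hm (A_main hp hE hM k V ⊤ hcard (fun _ _ _ _ => Subgroup.mem_top _) ?_ m
    (Subgroup.mem_top m) g hg)
  intro B hBV hBc m' _ hfix g' hg'
  exact hcon B hBV hBc m' hfix g' hg'

end AbelianMain

section Nilpotent

variable {E : Type*} [CommGroup E] [Finite E] {p : ℕ} (hp : p.Prime) (hE : ∀ x : E, x ^ p = 1)

lemma center_ne_bot_of_nilpotent {Q : Type*} [Group Q] [Nontrivial Q]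
    (hnil : Group.IsNilpotent Q) : Subgroup.center Q ≠ ⊥ := by
  intro hbot
  have hall : ∀ n, upperCentralSeries Q n = ⊥ := by
    intro n
    induction n with
    | zero => exact upperCentralSeries_zero Q
    | succ n ih =>
      ext x
      simp only [Subgroup.mem_bot]
      constructor
      · intro hx
        have h1 : ∀ y : Q, x * y * x⁻¹ * y⁻¹ ∈ upperCentralSeries Q n :=
          (mem_upperCentralSeries_succ_iff).mp hx
        have h2 : x ∈ Subgroup.center Q := by
          rw [Subgroup.mem_center_iff]
          intro g
          have := h1 g
          rw [ih, Subgroup.mem_bot] at this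
          have h3 : x * g = g * x := by
            have h4 : x * g * x⁻¹ * g⁻¹ * g * x = g * x := by rw [this]; group
            calc x * g = x * g * x⁻¹ * g⁻¹ * g * x := by group
              _ = g * x := h4
          exact h3.symm
        rw [hbot, Subgroup.mem_bot] at h2
        exact h2
      · rintro rfl
        exact Subgroup.one_mem _
  obtain ⟨n, hn⟩ := hnil.nilpotent'
  obtain ⟨x, hx⟩ := exists_ne (1 : Q)
  have hx1 : x ∈ upperCentralSeries Q n :=
    (show x ∈ Subgroup.upperCentralSeries Q n from hn ▸ Subgroup.mem_top x)
  rw [hall n, Subgroup.mem_bot] at hx1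
  exact hx hx1

include hp in
/-- the cocycle lemma: if `F` acts trivially on the centre and fixes `q` modulo the centre,
then it fixes `q`. -/
lemma fix_of_quot_fix {Q : Type*} [Group Q] [Finite Q] [MulDistribMulAction E Q]
    (hQp : ¬ p ∣ Nat.card Q)
    (F : Subgroup E) (hFZ : ∀ f ∈ F, ∀ z ∈ Subgroup.center Q, f • z = z)
    {q : Q} (hq : ∀ f ∈ F, q⁻¹ * (f • q) ∈ Subgroup.center Q)
    (hEF : ∀ f ∈ F, f ^ p = 1) :
    ∀ f ∈ F, f • q = q := by
  intro f hf
  set c : E → Q := fun f => q⁻¹ * (f • q) with hc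
  have hmul : ∀ f₁ ∈ F, ∀ f₂ ∈ F, c (f₁ * f₂) = c f₁ * c f₂ := by
    intro f₁ h1 f₂ h2
    have hkey : (f₁ * f₂) • q = (f₁ • q) * c f₂ := by
      rw [mul_smul]
      have h3 : f₂ • q = q * c f₂ := by rw [hc]; group
      rw [h3, smul_mul', hFZ f₁ h1 (c f₂) (hq f₂ h2)]
    show q⁻¹ * ((f₁ * f₂) • q) = (q⁻¹ * (f₁ • q)) * (q⁻¹ * (f₂ • q))
    rw [hkey]
    show q⁻¹ * ((f₁ • q) * (q⁻¹ * (f₂ • q))) = (q⁻¹ * (f₁ • q)) * (q⁻¹ * (f₂ • q))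
    group
  have hpow : ∀ n : ℕ, c (f ^ (n + 1)) = (c f) ^ (n + 1) := by
    intro n
    induction n with
    | zero => simp
    | succ n ih =>
      have hfn : f ^ (n + 1) ∈ F := pow_mem hf _
      calc c (f ^ (n + 1 + 1)) = c (f ^ (n + 1) * f) := by rw [pow_succ]
        _ = c (f ^ (n + 1)) * c f := hmul _ hfn _ hf
        _ = (c f) ^ (n + 1) * c f := by rw [ih]
        _ = (c f) ^ (n + 1 + 1) := by rw [pow_succ (c f) (n + 1)]
  have hcp : (c f) ^ p = 1 := by
    obtain ⟨n, rfl⟩ : ∃ n, p = n + 1 := ⟨p - 1, (Nat.succ_pred_eq_of_pos hp.pos).symm⟩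
    rw [← hpow n, hEF f hf]
    show q⁻¹ * (1 : E) • q = 1
    rw [one_smul, inv_mul_cancel]
  have hord : orderOf (c f) ∣ p := orderOf_dvd_of_pow_eq_one hcp
  have hc1 : c f = 1 := by
    rcases (Nat.dvd_prime hp).mp hord with h1 | h1
    · exact orderOf_eq_one_iff.mp h1
    · exfalso
      exact hQp (h1 ▸ orderOf_dvd_natCard (c f))
  have : q⁻¹ * (f • q) = 1 := hc1
  calc f • q = q * (q⁻¹ * (f • q)) := by group
    _ = q := by rw [this, mul_one]

lemma smul_center_mem {Q : Type*} [Group Q] [MulDistribMulAction E Q] (g : E) {z : Q}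
    (hz : z ∈ Subgroup.center Q) : g • z ∈ Subgroup.center Q := by
  rw [Subgroup.mem_center_iff]
  intro q
  have h1 : q = g • (g⁻¹ • q) := (smul_inv_smul g q).symm
  rw [h1, ← smul_mul', ← smul_mul',
    (Subgroup.mem_center_iff.mp hz (g⁻¹ • q)).symm]

include hp hE in
lemma center_case {Q : Type*} [Group Q] [Finite Q] [MulDistribMulAction E Q]
    (hQp : ¬ p ∣ Nat.card Q) (k : ℕ) (V : Subgroup E) (hcard : Nat.card V = p ^ k)
    (hnt : ∃ g ∈ V, ∃ z ∈ Subgroup.center Q, g • z ≠ z) :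
    ∃ B : Subgroup E, B ≤ V ∧ Nat.card B = p ^ (k - 1) ∧
      ∃ q : Q, (∀ b ∈ B, b • q = q) ∧ ∃ g ∈ V, g • q ≠ q := by
  letI : CommGroup ↥(Subgroup.center Q) := { (Subgroup.center Q).toGroup with
    mul_comm := fun a b => Subtype.ext (Subgroup.mem_center_iff.mp b.2 a) }
  letI : MulDistribMulAction E ↥(Subgroup.center Q) :=
    { smul := fun g z => ⟨g • (z : Q), smul_center_mem g z.2⟩
      one_smul := fun z => Subtype.ext (one_smul E (z : Q))
      mul_smul := fun g h z => Subtype.ext (mul_smul g h (z : Q))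
      smul_mul := fun g z w => Subtype.ext (smul_mul' g (z : Q) (w : Q))
      smul_one := fun g => Subtype.ext (smul_one g) }
  have hMp : ¬ p ∣ Nat.card ↥(Subgroup.center Q) :=
    fun h => hQp (h.trans (Subgroup.card_subgroup_dvd_card _))
  obtain ⟨g, hgV, z, hz, hgz⟩ := hnt
  have hnt' : ∃ g ∈ V, ∃ m : ↥(Subgroup.center Q), g • m ≠ m := by
    refine ⟨g, hgV, ⟨z, hz⟩, fun h => hgz ?_⟩
    exact congrArg Subtype.val h
  obtain ⟨B, hBV, hBcard, m, hmfix, g', hg'V, hg'm⟩ := A_exists hp hE hMp k V hcard hnt'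
  refine ⟨B, hBV, hBcard, (m : Q), ?_, g', hg'V, ?_⟩
  · intro b hb
    exact congrArg Subtype.val (hmfix b hb)
  · intro h
    exact hg'm (Subtype.ext h)

lemma center_comap_le {Q : Type*} [Group Q] [MulDistribMulAction E Q] (g : E) :
    Subgroup.center Q ≤ (Subgroup.center Q).comap (MulDistribMulAction.toMonoidHom Q g) := by
  intro z hz
  have : (MulDistribMulAction.toMonoidHom Q g) z ∈ Subgroup.center Q := smul_center_mem g hz
  exact this

/-- the induced action on the quotient by the centre -/
def quotAct (Q : Type*) [Group Q] [MulDistribMulAction E Q] :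
    MulDistribMulAction E (Q ⧸ Subgroup.center Q) where
  smul g := QuotientGroup.map _ _ (MulDistribMulAction.toMonoidHom Q g) (center_comap_le g)
  one_smul x := QuotientGroup.induction_on x (fun q => by
    show QuotientGroup.map _ _ _ _ (QuotientGroup.mk q) = _
    rw [QuotientGroup.map_mk]
    show QuotientGroup.mk ((1 : E) • q) = QuotientGroup.mk q
    rw [one_smul])
  mul_smul g h x := QuotientGroup.induction_on x (fun q => by
    show QuotientGroup.map _ _ _ _ (QuotientGroup.mk q) =
      QuotientGroup.map _ _ _ _ (QuotientGroup.map _ _ _ _ (QuotientGroup.mk q))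
    rw [QuotientGroup.map_mk, QuotientGroup.map_mk, QuotientGroup.map_mk]
    show QuotientGroup.mk ((g * h) • q) = QuotientGroup.mk (g • h • q)
    rw [mul_smul])
  smul_mul g x y := QuotientGroup.induction_on x (fun a =>
    QuotientGroup.induction_on y (fun b => by
    show QuotientGroup.map _ _ _ _ (QuotientGroup.mk (a * b)) =
      QuotientGroup.map _ _ _ _ (QuotientGroup.mk a) *
        QuotientGroup.map _ _ _ _ (QuotientGroup.mk b)
    rw [QuotientGroup.map_mk, QuotientGroup.map_mk, QuotientGroup.map_mk]
    show QuotientGroup.mk (g • (a * b)) = QuotientGroup.mk (g • a) * QuotientGroup.mk (g • b)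
    rw [smul_mul']
    rfl))
  smul_one g := by
    show QuotientGroup.map _ _ _ _ 1 = 1
    exact map_one _

universe w

include hp hE in
lemma lemM (N : ℕ) : ∀ (Q : Type w) [Group Q] [Finite Q] [MulDistribMulAction E Q],
    Nat.card Q ≤ N → Group.IsNilpotent Q → ¬ p ∣ Nat.card Q →
    ∀ (k : ℕ) (V : Subgroup E), Nat.card V = p ^ k →
    (∃ g ∈ V, ∃ q : Q, g • q ≠ q) →
    ∃ B : Subgroup E, B ≤ V ∧ Nat.card B = p ^ (k - 1) ∧
      ∃ q : Q, (∀ b ∈ B, b • q = q) ∧ ∃ g ∈ V, g • q ≠ q := by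
  induction N with
  | zero =>
    intro Q _ _ _ hle _ _ _ _ _ _
    exfalso
    have := Nat.card_pos (α := Q)
    omega
  | succ N ihN =>
    intro Q _ _ _ hle hnil hQp k V hcard hnt
    by_cases hcent : ∃ g ∈ V, ∃ z ∈ Subgroup.center Q, g • z ≠ z
    · exact center_case hp hE hQp k V hcard hcent
    · push_neg at hcent
      obtain ⟨g₁, hg₁, q₁, hq₁⟩ := hnt
      haveI : Nontrivial Q := ⟨⟨g₁ • q₁, q₁, hq₁⟩⟩
      have hZne : Subgroup.center Q ≠ ⊥ := center_ne_bot_of_nilpotent hnil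
      letI := quotAct (E := E) Q
      have hsmulmk : ∀ (g : E) (q : Q),
          g • (QuotientGroup.mk q : Q ⧸ Subgroup.center Q) = QuotientGroup.mk (g • q) :=
        fun g q => QuotientGroup.map_mk _ _ _ _ q
      have hnt' : ∃ g ∈ V, ∃ x : Q ⧸ Subgroup.center Q, g • x ≠ x := by
        refine ⟨g₁, hg₁, QuotientGroup.mk q₁, fun hfix => ?_⟩
        have hst : Subgroup.zpowers g₁ ≤
            MulAction.stabilizer E (QuotientGroup.mk q₁ : Q ⧸ Subgroup.center Q) :=
          Subgroup.zpowers_le.mpr hfix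
        have hq : ∀ f ∈ Subgroup.zpowers g₁, q₁⁻¹ * (f • q₁) ∈ Subgroup.center Q := by
          intro f hf
          have h2 : (QuotientGroup.mk q₁ : Q ⧸ Subgroup.center Q) = QuotientGroup.mk (f • q₁) := by
            rw [← hsmulmk]
            exact (hst hf).symm
          exact (QuotientGroup.eq).mp h2
        have hfz : ∀ f ∈ Subgroup.zpowers g₁, ∀ z ∈ Subgroup.center Q, f • z = z :=
          fun f hf => hcent f (Subgroup.zpowers_le.mpr hg₁ hf)
        exact hq₁ (fix_of_quot_fix hp hQp (Subgroup.zpowers g₁) hfz hq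
          (fun f _ => hE f) g₁ (Subgroup.mem_zpowers g₁))
      have hcardeq := Subgroup.card_eq_card_quotient_mul_card_subgroup (Subgroup.center Q)
      have hZ2 : 1 < Nat.card ↥(Subgroup.center Q) :=
        (Subgroup.one_lt_card_iff_ne_bot _).mpr hZne
      have hqpos : 0 < Nat.card (Q ⧸ Subgroup.center Q) := Nat.card_pos
      have hle' : Nat.card (Q ⧸ Subgroup.center Q) ≤ N := by
        have h1 : Nat.card (Q ⧸ Subgroup.center Q) * 2 ≤
            Nat.card (Q ⧸ Subgroup.center Q) * Nat.card ↥(Subgroup.center Q) :=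
          Nat.mul_le_mul_left _ hZ2
        rw [← hcardeq] at h1
        omega
      have hdvd' : ¬ p ∣ Nat.card (Q ⧸ Subgroup.center Q) :=
        fun h => hQp (h.trans (Dvd.intro _ hcardeq.symm))
      haveI : Group.IsNilpotent Q := hnil
      have hnil' : Group.IsNilpotent (Q ⧸ Subgroup.center Q) := inferInstance
      obtain ⟨B, hBV, hBcard, x, hxfix, g, hgV, hgx⟩ :=
        ihN (Q ⧸ Subgroup.center Q) hle' hnil' hdvd' k V hcard hnt'
      obtain ⟨q, rfl⟩ := QuotientGroup.mk_surjective x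
      refine ⟨B, hBV, hBcard, q, ?_, g, hgV, ?_⟩
      · have hq : ∀ f ∈ B, q⁻¹ * (f • q) ∈ Subgroup.center Q := by
          intro f hf
          have h2 : (QuotientGroup.mk q : Q ⧸ Subgroup.center Q) = QuotientGroup.mk (f • q) := by
            rw [← hsmulmk]
            exact (hxfix f hf).symm
          exact (QuotientGroup.eq).mp h2
        exact fix_of_quot_fix hp hQp B (fun f hf => hcent f (hBV hf)) hq (fun f _ => hE f)
      · intro h
        apply hgx
        rw [hsmulmk, h]

end Nilpotent

section Chain

variable {E Q : Type*} [CommGroup E] [Finite E] [Group Q] [Finite Q]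
  [MulDistribMulAction E Q] [FaithfulSMul E Q]
variable {p : ℕ} (hp : p.Prime) (hE : ∀ x : E, x ^ p = 1)
  (hnil : Group.IsNilpotent Q) (hQp : ¬ p ∣ Nat.card Q)

include hp hE hnil hQp in
lemma chain_aux : ∀ (k : ℕ) (V : Subgroup E), Nat.card V = p ^ k →
    ∃ c : Fin (k + 1) → Subgroup E, c 0 = V ∧ c (Fin.last k) = ⊥ ∧ StrictAnti c ∧
      StrictMono (fun i => {q : Q | ∀ f ∈ c i, f • q = q}) := by
  intro k
  induction k with
  | zero =>
    intro V hcard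
    have hV : V = ⊥ := Subgroup.card_eq_one.mp (by simpa using hcard)
    refine ⟨fun _ => ⊥, hV.symm, rfl, ?_, ?_⟩
    · intro a b hab
      exact absurd ((Fin.fin_one_eq_zero a).trans (Fin.fin_one_eq_zero b).symm ▸ hab)
        (lt_irrefl b)
    · intro a b hab
      exact absurd ((Fin.fin_one_eq_zero a).trans (Fin.fin_one_eq_zero b).symm ▸ hab)
        (lt_irrefl b)
  | succ k ih =>
    intro V hcard
    -- find a nontrivially-acting element of V
    have hVne : V ≠ ⊥ := by
      intro h
      rw [h] at hcard
      simp only [Subgroup.card_bot] at hcard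
      exact absurd hcard.symm (Nat.ne_of_gt (Nat.one_lt_pow (Nat.succ_ne_zero k) hp.one_lt))
    obtain ⟨⟨g₁, hg₁V⟩, hg₁⟩ := Subgroup.ne_bot_iff_exists_ne_one.mp hVne
    have hg₁1 : g₁ ≠ 1 := by simpa [Subtype.ext_iff] using hg₁
    have hnt : ∃ g ∈ V, ∃ q : Q, g • q ≠ q := by
      refine ⟨g₁, hg₁V, ?_⟩
      by_contra hcon
      push_neg at hcon
      exact hg₁1 (FaithfulSMul.eq_of_smul_eq_smul (fun q : Q => by rw [hcon q, one_smul]))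
    obtain ⟨B, hBV, hBcard, q₀, hq₀fix, g₀, hg₀V, hg₀q⟩ :=
      lemM hp hE (Nat.card Q) Q le_rfl hnil hQp (k + 1) V hcard hnt
    simp only [Nat.add_sub_cancel] at hBcard
    obtain ⟨c', hc'0, hc'last, hc'anti, hc'mono⟩ := ih B hBcard
    have hBltV : B < V := by
      refine lt_of_le_of_ne hBV ?_
      intro h
      rw [h, hcard] at hBcard
      exact absurd hBcard (Nat.ne_of_gt (Nat.pow_lt_pow_right hp.one_lt (Nat.lt_succ_self k)))
    refine ⟨Fin.cons V c', Fin.cons_zero _ _, ?_, ?_, ?_⟩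
    · rw [← Fin.succ_last, Fin.cons_succ]
      exact hc'last
    · rw [Fin.strictAnti_iff_succ_lt]
      intro i
      induction i using Fin.cases with
      | zero =>
        rw [Fin.cons_succ, Fin.castSucc_zero, Fin.cons_zero, hc'0]
        exact hBltV
      | succ j =>
        rw [Fin.cons_succ, ← Fin.succ_castSucc, Fin.cons_succ]
        exact hc'anti (Fin.castSucc_lt_succ (i := j))
    · rw [Fin.strictMono_iff_lt_succ]
      intro i
      induction i using Fin.cases with
      | zero =>
        simp only [Fin.castSucc_zero, Fin.cons_zero, Fin.cons_succ, hc'0]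
        refine lt_of_le_not_ge ?_ ?_
        · intro q hq f hfB
          exact hq f (hBV hfB)
        · intro hge
          have hq₀V : ∀ f ∈ V, f • q₀ = q₀ := hge hq₀fix
          exact hg₀q (hq₀V g₀ hg₀V)
      | succ j =>
        simp only [Fin.cons_succ, ← Fin.succ_castSucc]
        exact hc'mono (Fin.castSucc_lt_succ (i := j))

end Chain

end EACH

theorem elementary_abelian_faithful_action_chain
    (p : ℕ) (hp : p.Prime) (n : ℕ) (E Q : Type*) [CommGroup E] [Group Q] [Finite Q]
    [MulDistribMulAction E Q] [FaithfulSMul E Q]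
    (hEelem : ∀ x : E, x ^ p = 1) (hEcard : Nat.card E = p ^ n)
    (hQnilp : Group.IsNilpotent Q) (hQp' : ¬ p ∣ Nat.card Q) :
    ∃ Ech : Fin (n + 1) → Subgroup E,
      Ech 0 = ⊤ ∧ Ech (Fin.last n) = ⊥ ∧ StrictAnti Ech ∧
      StrictMono (fun i => fixedSet (Q := Q) (Ech i).toSubmonoid) := by
  haveI : Finite E := Nat.finite_of_card_ne_zero (by rw [hEcard]; exact (pow_pos hp.pos n).ne')
  have hcardtop : Nat.card (⊤ : Subgroup E) = p ^ n := by rw [Subgroup.card_top, hEcard]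
  obtain ⟨c, hc0, hclast, hanti, hmono⟩ := EACH.chain_aux hp hEelem hQnilp hQp' n ⊤ hcardtop
  exact ⟨c, hc0, hclast, hanti, hmono⟩
end
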